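/- arXiv:1302.4885 — 8 statements merged into one kernel-verified Lean document; each statement's English description precedes it below -/
import Mathlib

section
/- For every t > 0, the integral over ℝ of |Γ(t+ix)|² dx equals 2π·Γ(2t)/4^t; equivalently, the function p_t(x) = (4^t/(2π·Γ(2t)))·|Γ(t+ix)|² is a probability density on ℝ. -/
open MeasureTheory Real Set
open scoped FourierTransform

noncomputable section MeixnerAux

namespace MeixnerAux

/-- cpow of a positive real base. -/
lemma cpow_pos_eq {r : ℝ} (hr : 0 < r) (c : ℂ) : (r : ℂ) ^ c = Complex.exp (↑(Real.log r) * c) := by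
  rw [Complex.cpow_def_of_ne_zero (by exact_mod_cast hr.ne'), Complex.ofReal_log hr.le]

lemma two_cosh_pos (s : ℝ) : 0 < 2 * Real.cosh (s / 2) := by positivity

lemma two_cosh_eq (s : ℝ) : 2 * Real.cosh (s / 2) = Real.exp (-(s / 2)) * (1 + Real.exp s) := by
  have : -(s / 2) + s = s / 2 := by ring
  rw [Real.cosh_eq, mul_add, mul_one, ← Real.exp_add, this]
  ring

lemma log_two_cosh (s : ℝ) :
    Real.log (2 * Real.cosh (s / 2)) = -(s / 2) + Real.log (1 + Real.exp s) := by
  rw [two_cosh_eq, Real.log_mul (Real.exp_pos _).ne' (by positivity), Real.log_exp]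

/-- the weight function -/
def h (t s : ℝ) : ℝ := (2 * Real.cosh (s / 2)) ^ (-(2 * t))

lemma h_pos (t s : ℝ) : 0 < h t s := Real.rpow_pos_of_pos (two_cosh_pos s) _

lemma h_continuous (t : ℝ) : Continuous (h t) := by
  apply Continuous.rpow_const
  · exact continuous_const.mul (Real.continuous_cosh.comp (continuous_id.div_const 2))
  · exact fun s => Or.inl (two_cosh_pos s).ne'

/-- integrability helper: domination by c * (a + x^2)⁻¹ -/
lemma integrable_of_le_const_div {f : ℝ → ℝ} (hm : AEStronglyMeasurable f volume)
    {c a : ℝ} (ha : 0 < a) (hb : ∀ x, ‖f x‖ ≤ c * (a + x ^ 2)⁻¹) :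
    Integrable f := by
  have h2 : Integrable (fun x : ℝ => (1 + ((Real.sqrt a)⁻¹ * x) ^ 2)⁻¹) :=
    integrable_inv_one_add_sq.comp_mul_left' (by positivity)
  have h3 : Integrable (fun x : ℝ => c * (a + x ^ 2)⁻¹) := by
    have := h2.const_mul (c * a⁻¹)
    refine this.congr (Filter.Eventually.of_forall fun x => ?_)
    have h4 : (0:ℝ) < Real.sqrt a := Real.sqrt_pos.mpr ha
    have hsq : Real.sqrt a ^ 2 = a := Real.sq_sqrt ha.le
    field_simp [hsq]
    rw [hsq]
  exact h3.mono' hm (Filter.Eventually.of_forall hb)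

lemma h_integrable {t : ℝ} (ht : 0 < t) : Integrable (h t) := by
  refine integrable_of_le_const_div ((h_continuous t).aestronglyMeasurable)
    (a := 4 / t ^ 2) (c := 4 / t ^ 2) (by positivity) (fun s => ?_)
  have hc : 2 * Real.cosh (s / 2) = Real.exp (s / 2) + Real.exp (-(s / 2)) := by
    rw [Real.cosh_eq]; ring
  have h1 : Real.exp (|s| / 2) ≤ 2 * Real.cosh (s / 2) := by
    rcases abs_cases s with ⟨he, _⟩ | ⟨he, _⟩
    · rw [he, hc]; linarith [Real.exp_pos (-(s / 2))]
    · rw [he, hc, neg_div]; linarith [Real.exp_pos (s / 2)]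
  have h2 : h t s ≤ Real.exp (|s| / 2) ^ (-(2 * t)) :=
    Real.rpow_le_rpow_of_nonpos (Real.exp_pos _) h1 (by linarith)
  have h3 : Real.exp (|s| / 2) ^ (-(2 * t)) = Real.exp (-(t * |s|)) := by
    rw [← Real.exp_log (Real.exp_pos (|s| / 2)), Real.log_exp, ← Real.exp_mul]
    ring_nf
  have e1 : 1 + t * |s| / 2 ≤ Real.exp (t * |s| / 2) := by
    have := Real.add_one_le_exp (t * |s| / 2); linarith
  have e2 : Real.exp (t * |s| / 2) ^ 2 = Real.exp (t * |s|) := by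
    rw [sq, ← Real.exp_add]; ring_nf
  have e3 : (1 + t * |s| / 2) ^ 2 ≤ Real.exp (t * |s|) := by
    rw [← e2]; exact pow_le_pow_left₀ (by positivity) e1 2
  have key : 4 / t ^ 2 + s ^ 2 ≤ 4 / t ^ 2 * Real.exp (t * |s|) := by
    have h5 : 4 / t ^ 2 * (1 + t * |s| / 2) ^ 2 ≤ 4 / t ^ 2 * Real.exp (t * |s|) :=
      mul_le_mul_of_nonneg_left e3 (by positivity)
    have h6 : 4 / t ^ 2 + s ^ 2 ≤ 4 / t ^ 2 * (1 + t * |s| / 2) ^ 2 := by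
      have hs : |s| ^ 2 = s ^ 2 := sq_abs s
      have habs : 0 ≤ |s| := abs_nonneg s
      have ht2 : 0 < t ^ 2 := by positivity
      rw [div_add' _ _ _ ht2.ne', div_mul_eq_mul_div, div_le_div_iff₀ ht2 ht2]
      have hcube : 0 ≤ 4 * t ^ 3 * |s| := by positivity
      have expand : 4 * (1 + t * |s| / 2) ^ 2 * t ^ 2
          = (4 + |s| ^ 2 * t ^ 2) * t ^ 2 + 4 * t ^ 3 * |s| := by ring
      rw [← hs, expand]
      linarith
    linarith
  have h4 : Real.exp (-(t * |s|)) ≤ 4 / t ^ 2 * (4 / t ^ 2 + s ^ 2)⁻¹ := by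
    have hexp : 0 < Real.exp (t * |s|) := Real.exp_pos _
    rw [Real.exp_neg, inv_le_comm₀ hexp (by positivity), mul_inv, inv_inv]
    calc (4 / t ^ 2)⁻¹ * (4 / t ^ 2 + s ^ 2)
        ≤ (4 / t ^ 2)⁻¹ * (4 / t ^ 2 * Real.exp (t * |s|)) :=
          mul_le_mul_of_nonneg_left key (by positivity)
      _ = Real.exp (t * |s|) := by field_simp
  rw [Real.norm_eq_abs, abs_of_pos (h_pos t s)]
  linarith

lemma abs_Gamma_le {z : ℂ} (hz : 0 < z.re) :
    ‖Complex.Gamma z‖ ≤ Real.Gamma z.re := by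
  rw [Complex.Gamma_eq_integral hz, Real.Gamma_eq_integral hz]
  calc ‖∫ x in Ioi (0:ℝ), ↑(Real.exp (-x)) * (x:ℂ) ^ (z - 1)‖
      ≤ ∫ x in Ioi (0:ℝ), ‖↑(Real.exp (-x)) * (x:ℂ) ^ (z - 1)‖ :=
        norm_integral_le_integral_norm _
    _ = ∫ x in Ioi (0:ℝ), Real.exp (-x) * x ^ (z.re - 1) := by
        refine setIntegral_congr_fun measurableSet_Ioi fun x hx => ?_
        rw [norm_mul, Complex.norm_real, Real.norm_eq_abs, abs_of_pos (Real.exp_pos _),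
          Complex.norm_cpow_eq_rpow_re_of_pos hx, Complex.sub_re,
          Complex.one_re]

lemma continuous_Gamma_line {t : ℝ} (ht : 0 < t) :
    Continuous fun x : ℝ => Complex.Gamma ((t : ℂ) + (x : ℂ) * Complex.I) := by
  rw [continuous_iff_continuousAt]
  intro x
  have hne : ∀ m : ℕ, (t : ℂ) + (x : ℂ) * Complex.I ≠ -m := by
    intro m heq
    have := congrArg Complex.re heq
    simp at this
    have : (0:ℝ) ≤ m := m.cast_nonneg
    linarith
  exact ContinuousAt.comp (Complex.differentiableAt_Gamma _ hne).continuousAt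
    (by fun_prop : ContinuousAt (fun x : ℝ => (t : ℂ) + (x : ℂ) * Complex.I) x)

lemma f_integrable {t : ℝ} (ht : 0 < t) :
    Integrable fun x : ℝ => ‖Complex.Gamma ((t : ℂ) + (x : ℂ) * Complex.I)‖ ^ 2 := by
  have hcont : Continuous fun x : ℝ =>
      ‖Complex.Gamma ((t : ℂ) + (x : ℂ) * Complex.I)‖ ^ 2 :=
    ((continuous_norm.comp (continuous_Gamma_line ht)).pow 2)
  refine integrable_of_le_const_div hcont.aestronglyMeasurable
    (c := Real.Gamma (t + 1) ^ 2) (a := t ^ 2) (by positivity) (fun x => ?_)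
  have hzne : (t : ℂ) + (x : ℂ) * Complex.I ≠ 0 := by
    intro hz
    have := congrArg Complex.re hz
    simp at this
    linarith
  have hrec : Complex.Gamma ((t : ℂ) + (x : ℂ) * Complex.I)
      = Complex.Gamma (((t : ℂ) + (x : ℂ) * Complex.I) + 1) / ((t : ℂ) + (x : ℂ) * Complex.I) := by
    rw [Complex.Gamma_add_one _ hzne, mul_div_cancel_left₀ _ hzne]
  have hre : (((t : ℂ) + (x : ℂ) * Complex.I) + 1).re = t + 1 := by simp
  have hb : ‖Complex.Gamma (((t : ℂ) + (x : ℂ) * Complex.I) + 1)‖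
      ≤ Real.Gamma (t + 1) := by
    have := abs_Gamma_le (z := ((t : ℂ) + (x : ℂ) * Complex.I) + 1) (by rw [hre]; linarith)
    rwa [hre] at this
  have habs2 : ‖(t : ℂ) + (x : ℂ) * Complex.I‖ ^ 2 = t ^ 2 + x ^ 2 := by
    rw [Complex.sq_norm, Complex.normSq_add_mul_I]
  rw [Real.norm_eq_abs, abs_of_nonneg (by positivity)]
  rw [hrec, norm_div, div_pow, habs2]
  rw [div_le_iff₀ (by positivity), mul_assoc, inv_mul_cancel₀ (by positivity), mul_one]
  exact pow_le_pow_left₀ (norm_nonneg _) hb 2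


noncomputable def L (s : ℝ) : ℝ := Real.exp s / (1 + Real.exp s)

lemma L_mem (s : ℝ) : L s ∈ Ioo (0:ℝ) 1 := by
  have hp : 0 < 1 + Real.exp s := by positivity
  exact ⟨div_pos (Real.exp_pos s) hp, (div_lt_one hp).mpr (by linarith [Real.exp_pos s])⟩

lemma L_image : L '' univ = Ioo (0:ℝ) 1 := by
  ext u
  simp only [image_univ, mem_range, mem_Ioo]
  constructor
  · rintro ⟨s, rfl⟩; exact L_mem s
  · rintro ⟨h0, h1⟩
    refine ⟨Real.log (u / (1 - u)), ?_⟩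
    have hu1 : 0 < 1 - u := by linarith
    rw [L, Real.exp_log (by positivity)]
    field_simp
    ring

lemma L_inj : Function.Injective L := by
  intro a b hab
  have ha : 0 < 1 + Real.exp a := by positivity
  have hb : 0 < 1 + Real.exp b := by positivity
  rw [L, L, div_eq_div_iff ha.ne' hb.ne'] at hab
  have : Real.exp a = Real.exp b := by nlinarith
  exact Real.exp_injective this

lemma L_hasDeriv (s : ℝ) :
    HasDerivAt L (Real.exp s / (1 + Real.exp s) ^ 2) s := by
  have h1 : HasDerivAt (fun s : ℝ => 1 + Real.exp s) (Real.exp s) s :=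
    (Real.hasDerivAt_exp s).const_add 1
  have h2 := (Real.hasDerivAt_exp s).div h1 (by positivity)
  have h3 : HasDerivAt L ((Real.exp s * (1 + Real.exp s) - Real.exp s * Real.exp s)
      / (1 + Real.exp s) ^ 2) s := h2
  convert h3 using 1
  ring

lemma one_sub_L (s : ℝ) : 1 - L s = (1 + Real.exp s)⁻¹ := by
  have hp : 0 < 1 + Real.exp s := by positivity
  rw [L]; field_simp
  ring

lemma log_L (s : ℝ) : Real.log (L s) = s - Real.log (1 + Real.exp s) := by
  rw [L, Real.log_div (Real.exp_pos s).ne' (by positivity), Real.log_exp]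


lemma gamma_fourier {t : ℝ} (ht : 0 < t) (x : ℝ) :
    Complex.Gamma ((t:ℂ) + (x:ℂ) * Complex.I) * Complex.Gamma ((t:ℂ) - (x:ℂ) * Complex.I)
      = (Real.Gamma (2*t) : ℂ)
        * ∫ s : ℝ, Complex.exp ((x:ℂ) * (s:ℂ) * Complex.I) * ((h t s : ℝ) : ℂ) := by
  have hre1 : 0 < ((t:ℂ) + (x:ℂ) * Complex.I).re := by simp [ht]
  have hre2 : 0 < ((t:ℂ) - (x:ℂ) * Complex.I).re := by simp [ht]
  rw [Complex.Gamma_mul_Gamma_eq_betaIntegral hre1 hre2]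
  have hsum : ((t:ℂ) + (x:ℂ)*Complex.I) + ((t:ℂ) - (x:ℂ)*Complex.I) = ((2*t : ℝ) : ℂ) := by
    push_cast; ring
  rw [hsum, Complex.Gamma_ofReal]
  congr 1
  set z : ℂ := (t:ℂ) + (x:ℂ) * Complex.I with hz
  set w : ℂ := (t:ℂ) - (x:ℂ) * Complex.I with hw
  rw [Complex.betaIntegral, intervalIntegral.integral_of_le zero_le_one,
    integral_Ioc_eq_integral_Ioo, ← L_image,
    integral_image_eq_integral_abs_deriv_smul MeasurableSet.univ
      (fun s _ => (L_hasDeriv s).hasDerivWithinAt) L_inj.injOn, setIntegral_univ]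
  congr 1
  funext s
  have hE : 0 < Real.exp s := Real.exp_pos s
  have hP : 0 < 1 + Real.exp s := by positivity
  have hL0 := (L_mem s).1
  have hL1 := (L_mem s).2
  have h1L : 0 < 1 - L s := by linarith
  rw [abs_of_pos (by positivity : (0:ℝ) < Real.exp s / (1 + Real.exp s) ^ 2)]
  have hexp2 : Real.exp (2 * Real.log (1 + Real.exp s)) = (1 + Real.exp s) ^ 2 := by
    rw [two_mul, Real.exp_add, Real.exp_log hP, sq]
  have hd : Real.exp s / (1 + Real.exp s) ^ 2 = Real.exp (s - 2 * Real.log (1 + Real.exp s)) := by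
    rw [Real.exp_sub, hexp2]
  have hcast : (1 : ℂ) - ((L s : ℝ) : ℂ) = ((1 - L s : ℝ) : ℂ) := by push_cast; ring
  have hh : h t s = Real.exp (Real.log (2 * Real.cosh (s / 2)) * (-(2 * t))) :=
    Real.rpow_def_of_pos (two_cosh_pos s) _
  rw [hd, cpow_pos_eq hL0, hcast, cpow_pos_eq h1L, hh, Complex.real_smul,
    Complex.ofReal_exp, Complex.ofReal_exp, ← Complex.exp_add, ← Complex.exp_add,
    ← Complex.exp_add]
  congr 1
  rw [log_L, one_sub_L, Real.log_inv, log_two_cosh]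
  simp only [hz, hw]
  push_cast
  ring


lemma conj_gamma_line (t x : ℝ) :
    Complex.Gamma ((t:ℂ) - (x:ℂ) * Complex.I)
      = (starRingEnd ℂ) (Complex.Gamma ((t:ℂ) + (x:ℂ) * Complex.I)) := by
  rw [← Complex.Gamma_conj]
  congr 1
  rw [map_add, map_mul, Complex.conj_ofReal, Complex.conj_ofReal, Complex.conj_I]
  ring

lemma gamma_prod_eq (t x : ℝ) :
    Complex.Gamma ((t:ℂ) + (x:ℂ) * Complex.I) * Complex.Gamma ((t:ℂ) - (x:ℂ) * Complex.I)
      = ((‖Complex.Gamma ((t:ℂ) + (x:ℂ) * Complex.I)‖ ^ 2 : ℝ) : ℂ) := by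
  rw [conj_gamma_line, Complex.mul_conj]
  norm_cast
  rw [Complex.sq_norm]

end MeixnerAux

open scoped FourierTransform in
/-- For every `t > 0`, `∫_ℝ |Γ(t+ix)|² dx = 2π·Γ(2t)/4^t`. -/
theorem meixner_density_integral (t : ℝ) (ht : 0 < t) :
    ∫ x : ℝ, ‖Complex.Gamma ((t : ℂ) + (x : ℂ) * Complex.I)‖ ^ 2
      = 2 * Real.pi * Real.Gamma (2 * t) / (4 : ℝ) ^ t := by
  classical
  set f : ℝ → ℝ := fun x => ‖Complex.Gamma ((t:ℂ)+(x:ℂ)*Complex.I)‖ ^ 2 with hf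
  have hΓpos : 0 < Real.Gamma (2*t) := Real.Gamma_pos_of_pos (by linarith)
  have hπ : (0:ℝ) < π := Real.pi_pos
  have hΓne : (Real.Gamma (2*t) : ℂ) ≠ 0 := by exact_mod_cast hΓpos.ne'
  set C : ℝ := 2 * π * Real.Gamma (2*t) with hC
  have hCpos : 0 < C := by positivity
  set G : ℝ → ℂ := fun σ => ((MeixnerAux.h t (2*π*σ) : ℝ) : ℂ) with hG
  have hGint : Integrable G :=
    ((MeixnerAux.h_integrable ht).comp_mul_left'
      (by positivity : (0:ℝ) < 2*π).ne').ofReal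
  have hGcont : Continuous G :=
    Complex.continuous_ofReal.comp
      ((MeixnerAux.h_continuous t).comp (continuous_const.mul continuous_id))
  have hFG : ∀ x : ℝ, 𝓕 G x = ((f x : ℝ) : ℂ) / (C : ℂ) := by
    intro x
    rw [Real.fourier_real_eq_integral_exp_smul]
    have step1 : ∀ σ : ℝ, Complex.exp (↑(-2*π*σ*x) * Complex.I) • G σ
        = (fun s : ℝ => Complex.exp ((((-x : ℝ)):ℂ) * (s:ℂ) * Complex.I)
            * ((MeixnerAux.h t s : ℝ):ℂ)) (2*π*σ) := by
      intro σ
      rw [smul_eq_mul]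
      congr 2
      push_cast; ring
    simp_rw [step1]
    rw [MeasureTheory.Measure.integral_comp_mul_left
      (fun s : ℝ => Complex.exp ((((-x : ℝ)):ℂ) * (s:ℂ) * Complex.I)
        * ((MeixnerAux.h t s : ℝ):ℂ)) (2*π)]
    have hgf := MeixnerAux.gamma_fourier ht (-x)
    have hcast1 : (t:ℂ) + (((-x:ℝ)):ℂ) * Complex.I = (t:ℂ) - (x:ℂ)*Complex.I := by
      push_cast; ring
    have hcast2 : (t:ℂ) - (((-x:ℝ)):ℂ) * Complex.I = (t:ℂ) + (x:ℂ)*Complex.I := by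
      push_cast; ring
    rw [hcast1, hcast2, mul_comm (Complex.Gamma ((t:ℂ) - (x:ℂ)*Complex.I)),
      MeixnerAux.gamma_prod_eq] at hgf
    have hint : (∫ s:ℝ, Complex.exp ((((-x:ℝ)):ℂ) * (s:ℂ) * Complex.I)
        * ((MeixnerAux.h t s : ℝ):ℂ)) = ((f x : ℝ):ℂ) / ↑(Real.Gamma (2*t)) := by
      rw [eq_div_iff hΓne, mul_comm]
      exact hgf.symm
    rw [hint, abs_of_pos (by positivity : (0:ℝ) < (2*π)⁻¹), Complex.real_smul]
    rw [hC]
    push_cast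
    have h2πne : ((2:ℂ) * ↑π) ≠ 0 := by
      simp [Real.pi_ne_zero]
    field_simp
  have hFint : Integrable (𝓕 G) := by
    have : Integrable (fun x : ℝ => ((f x:ℝ):ℂ) / (C:ℂ)) :=
      (MeixnerAux.f_integrable ht).ofReal.div_const _
    exact this.congr (Filter.Eventually.of_forall fun x => (hFG x).symm)
  have hinv := hGint.fourierInv_fourier_eq hFint (v := 0) hGcont.continuousAt
  have hL : 𝓕⁻ (𝓕 G) 0 = ∫ x : ℝ, 𝓕 G x := by
    rw [Real.fourierInv_eq_fourier_neg, neg_zero, Real.fourier_real_eq]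
    simp
  have hG0 : G 0 = (((2:ℝ) ^ (-(2*t)) : ℝ) : ℂ) := by
    simp [hG, MeixnerAux.h, Real.cosh_zero]
  have hIF : ∫ x : ℝ, 𝓕 G x = (((∫ x : ℝ, f x) : ℝ) : ℂ) / (C : ℂ) := by
    simp_rw [hFG]
    rw [integral_div,
      show (∫ a : ℝ, ((f a : ℝ) : ℂ)) = ((∫ x : ℝ, f x : ℝ) : ℂ) from integral_ofReal]
  have hmain : (((∫ x : ℝ, f x) : ℝ) : ℂ) / (C : ℂ) = (((2:ℝ) ^ (-(2*t)) : ℝ) : ℂ) := by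
    rw [← hIF, ← hL, hinv, hG0]
  have hre : (∫ x : ℝ, f x) / C = (2:ℝ) ^ (-(2*t)) := by
    exact_mod_cast hmain
  have h4 : (4:ℝ) ^ t = (2:ℝ) ^ (2*t) := by
    rw [Real.rpow_mul (by norm_num : (0:ℝ) ≤ 2)]
    norm_num
  have h2neg : (2:ℝ) ^ (-(2*t)) = ((4:ℝ) ^ t)⁻¹ := by
    rw [Real.rpow_neg (by norm_num : (0:ℝ) ≤ 2), h4]
  have h4pos : (0:ℝ) < (4:ℝ) ^ t := Real.rpow_pos_of_pos (by norm_num) t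
  rw [div_eq_iff hCpos.ne'] at hre
  show (∫ x : ℝ, f x) = C / (4:ℝ) ^ t
  rw [hre, h2neg, inv_mul_eq_div]
end MeixnerAux
end

section
/- For every t > 0, the function x ↦ |Γ(t+ix)|² is strictly decreasing on [0, ∞); in particular its derivative at every x > 0 is strictly negative (it equals −2|Γ(t+ix)|²·Σ_{n=0}^∞ x/((t+n)²+x²)). -/
open Filter Topology

lemma aux_summable_inv_sq (t : ℝ) (ht : 0 < t) :
    Summable fun n : ℕ => ((t + n) ^ 2)⁻¹ := by
  rw [← summable_nat_add_iff 1]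
  have h : Summable fun n : ℕ => (((n : ℝ) + 1) ^ 2)⁻¹ := by
    have := Real.summable_nat_rpow_inv.mpr (by norm_num : (1:ℝ) < 2)
    rw [← summable_nat_add_iff 1] at this
    simpa [Real.rpow_natCast] using this
  refine h.of_nonneg_of_le (fun n => by positivity) fun n => ?_
  have h2 : ((n:ℝ) + 1) ≤ t + (n + 1 : ℕ) := by push_cast; linarith
  have h1 : (0:ℝ) < (n:ℝ) + 1 := by positivity
  gcongr

open Complex

lemma aux_prod_pair (t x : ℝ) (n : ℕ) :
    (∏ j ∈ Finset.range (n+1), ((t:ℂ) + (x:ℂ)*Complex.I + (j:ℂ))) *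
      ∏ j ∈ Finset.range (n+1), ((t:ℂ) - (x:ℂ)*Complex.I + (j:ℂ))
    = ∏ j ∈ Finset.range (n+1), (((t+j)^2 + x^2 : ℝ) : ℂ) := by
  rw [← Finset.prod_mul_distrib]
  refine Finset.prod_congr rfl fun j _ => ?_
  have h : ((t:ℂ) + (x:ℂ)*Complex.I + (j:ℂ)) * ((t:ℂ) - (x:ℂ)*Complex.I + (j:ℂ))
      = ((t:ℂ)+(j:ℂ))^2 - (x:ℂ)^2 * Complex.I^2 := by ring
  rw [h, Complex.I_sq]
  push_cast
  ring

lemma aux_ratio (t x : ℝ) (ht : 0 < t) (n : ℕ) (hn : n ≠ 0) :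
    Complex.GammaSeq ((t:ℂ) + (x:ℂ)*Complex.I) n * Complex.GammaSeq ((t:ℂ) - (x:ℂ)*Complex.I) n /
      (Complex.GammaSeq (t:ℂ) n)^2
    = ((∏ j ∈ Finset.range (n+1), ((t+j)^2 / ((t+j)^2 + x^2)) : ℝ) : ℂ) := by
  have hN : (n:ℂ) ≠ 0 := Nat.cast_ne_zero.mpr hn
  have hF : (n.factorial : ℂ) ≠ 0 := by exact_mod_cast (Nat.factorial_pos n).ne'
  have hpow : (n:ℂ)^((t:ℂ)+(x:ℂ)*Complex.I) * (n:ℂ)^((t:ℂ)-(x:ℂ)*Complex.I) = ((n:ℂ)^(t:ℂ))^2 := by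
    rw [← Complex.cpow_add _ _ hN, sq, ← Complex.cpow_add _ _ hN]
    ring_nf
  have hNt : (n:ℂ)^(t:ℂ) ≠ 0 := by
    simp [Complex.cpow_eq_zero_iff, hN]
  have hP : (∏ j ∈ Finset.range (n+1), ((t:ℂ) + (j:ℂ))) ≠ 0 := by
    refine Finset.prod_ne_zero_iff.mpr fun j _ => ?_
    have : ((t:ℂ) + (j:ℂ)) = ((t + j : ℝ) : ℂ) := by push_cast; ring
    rw [this, Complex.ofReal_ne_zero]
    positivity
  have hQ : ∀ j ∈ Finset.range (n+1), (((t+j)^2 + x^2 : ℝ) : ℂ) ≠ 0 := by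
    intro j _
    rw [Complex.ofReal_ne_zero]
    positivity
  have hQ' : (∏ j ∈ Finset.range (n+1), (((t+j)^2 + x^2 : ℝ) : ℂ)) ≠ 0 :=
    Finset.prod_ne_zero_iff.mpr hQ
  have hsq : (∏ j ∈ Finset.range (n+1), ((t:ℂ) + (j:ℂ)))^2
      = ∏ j ∈ Finset.range (n+1), (((t+j)^2 : ℝ) : ℂ) := by
    rw [sq, ← Finset.prod_mul_distrib]
    refine Finset.prod_congr rfl fun j _ => ?_
    push_cast; ring
  rw [Complex.GammaSeq, Complex.GammaSeq, Complex.GammaSeq]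
  rw [Complex.ofReal_prod]
  push_cast [Complex.ofReal_div]
  rw [div_mul_div_comm, div_pow, div_div_div_eq]
  rw [show ((n:ℂ)^((t:ℂ)+(x:ℂ)*Complex.I) * (n.factorial : ℂ)) * ((n:ℂ)^((t:ℂ)-(x:ℂ)*Complex.I) * (n.factorial : ℂ))
      = ((n:ℂ)^(t:ℂ))^2 * ((n.factorial : ℂ))^2 from by rw [← hpow]; ring]
  rw [hsq, aux_prod_pair, Finset.prod_div_distrib, mul_pow]
  have e1 : (∏ j ∈ Finset.range (n+1), (((t+(j:ℝ))^2 : ℝ) : ℂ))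
      = ∏ j ∈ Finset.range (n+1), ((t:ℂ)+(j:ℂ))^2 :=
    Finset.prod_congr rfl fun j _ => by push_cast; ring
  have e2 : (∏ j ∈ Finset.range (n+1), (((t+(j:ℝ))^2 + x^2 : ℝ) : ℂ))
      = ∏ j ∈ Finset.range (n+1), (((t:ℂ)+(j:ℂ))^2 + (x:ℂ)^2) :=
    Finset.prod_congr rfl fun j _ => by push_cast; ring
  rw [e1, e2]
  rw [mul_comm (∏ j ∈ Finset.range (n+1), (((t:ℂ)+(j:ℂ))^2 + (x:ℂ)^2)) _]
  exact mul_div_mul_left _ _ (by exact mul_ne_zero (pow_ne_zero _ hNt) (pow_ne_zero _ hF))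

lemma aux_summable_log (t x : ℝ) (ht : 0 < t) :
    Summable fun n : ℕ => Real.log (1 + x^2/(t+n)^2) := by
  refine ((aux_summable_inv_sq t ht).mul_left (x^2)).of_nonneg_of_le
    (fun n => Real.log_nonneg (by
      have : (0:ℝ) ≤ x^2/(t+n)^2 := by positivity
      linarith)) fun n => ?_
  have h := Real.log_le_sub_one_of_pos (show (0:ℝ) < 1 + x^2/(t+n)^2 by positivity)
  calc Real.log (1 + x^2/(t+n)^2) ≤ 1 + x^2/(t+n)^2 - 1 := h
    _ = x^2 * ((t+n)^2)⁻¹ := by ring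

lemma aux_key (t x : ℝ) (ht : 0 < t) :
    ‖Complex.Gamma ((t:ℂ) + (x:ℂ) * Complex.I)‖ ^ 2
      = Real.Gamma t ^ 2 * Real.exp (-(∑' n : ℕ, Real.log (1 + x^2/(t+n)^2))) := by
  have hsum := aux_summable_log t x ht
  set S := ∑' n : ℕ, Real.log (1 + x^2/(t+n)^2) with hS
  have h0 : ∀ m : ℕ, ∏ j ∈ Finset.range m, ((t+j)^2/((t+j)^2+x^2))
      = Real.exp (-(∑ j ∈ Finset.range m, Real.log (1 + x^2/(t+j)^2))) := by
    intro m
    rw [← Finset.sum_neg_distrib, Real.exp_sum]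
    refine Finset.prod_congr rfl fun j _ => ?_
    have hc : (0:ℝ) < (t+j)^2 := by positivity
    rw [Real.exp_neg, Real.exp_log (by positivity)]
    rw [inv_eq_one_div]
    rw [div_eq_div_iff (by positivity) (by positivity)]
    field_simp
  have hprod : Tendsto (fun n : ℕ => ∏ j ∈ Finset.range (n+1), ((t+j)^2/((t+j)^2+x^2)))
      atTop (𝓝 (Real.exp (-S))) := by
    have h1 : Tendsto (fun m : ℕ => Real.exp (-(∑ j ∈ Finset.range m, Real.log (1 + x^2/(t+j)^2))))
        atTop (𝓝 (Real.exp (-S))) :=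
      (Real.continuous_exp.tendsto _).comp (hsum.hasSum.tendsto_sum_nat.neg)
    have h2 := h1.comp (tendsto_add_atTop_nat 1)
    refine h2.congr fun n => ?_
    exact (h0 (n+1)).symm
  have hGne : Complex.Gamma (t:ℂ) ≠ 0 :=
    Complex.Gamma_ne_zero_of_re_pos (by simpa using ht)
  have hc : Tendsto (fun n : ℕ => ((∏ j ∈ Finset.range (n+1), ((t+j)^2/((t+j)^2+x^2)) : ℝ) : ℂ))
      atTop (𝓝 (Complex.Gamma ((t:ℂ)+(x:ℂ)*Complex.I) * Complex.Gamma ((t:ℂ)-(x:ℂ)*Complex.I)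
        / (Complex.Gamma (t:ℂ))^2)) := by
    have h1 := (Complex.GammaSeq_tendsto_Gamma ((t:ℂ)+(x:ℂ)*Complex.I)).mul
      (Complex.GammaSeq_tendsto_Gamma ((t:ℂ)-(x:ℂ)*Complex.I))
    have h2 := (Complex.GammaSeq_tendsto_Gamma (t:ℂ)).pow 2
    have h3 := h1.div h2 (pow_ne_zero 2 hGne)
    refine h3.congr' ?_
    filter_upwards [eventually_ne_atTop 0] with n hn
    exact aux_ratio t x ht n hn
  have hc2 : Tendsto (fun n : ℕ => ((∏ j ∈ Finset.range (n+1), ((t+j)^2/((t+j)^2+x^2)) : ℝ) : ℂ))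
      atTop (𝓝 ((Real.exp (-S) : ℝ) : ℂ)) := Filter.tendsto_ofReal_iff.mpr hprod
  have heq := tendsto_nhds_unique hc hc2
  have hconj : Complex.Gamma ((t:ℂ)-(x:ℂ)*Complex.I)
      = (starRingEnd ℂ) (Complex.Gamma ((t:ℂ)+(x:ℂ)*Complex.I)) := by
    rw [← Complex.Gamma_conj]
    congr 1
    rw [map_add, map_mul]
    simp [Complex.conj_ofReal, Complex.conj_I]
    ring
  rw [hconj, Complex.mul_conj] at heq
  have habs : (Complex.normSq (Complex.Gamma ((t:ℂ)+(x:ℂ)*Complex.I)) : ℝ)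
      = ‖Complex.Gamma ((t:ℂ)+(x:ℂ)*Complex.I)‖ ^ 2 := (Complex.sq_norm _).symm
  rw [habs] at heq
  rw [Complex.Gamma_ofReal] at heq
  rw [div_eq_iff (pow_ne_zero 2 (by rwa [Complex.Gamma_ofReal] at hGne))] at heq
  have h2 : ‖Complex.Gamma ((t:ℂ)+(x:ℂ)*Complex.I)‖ ^ 2
      = Real.exp (-S) * Real.Gamma t ^ 2 := by exact_mod_cast heq
  rw [h2]; ring

lemma aux_hasDerivAt_S (t : ℝ) (ht : 0 < t) (x : ℝ) :
    HasDerivAt (fun y : ℝ => ∑' n : ℕ, Real.log (1 + y^2/(t+n)^2))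
      (∑' n : ℕ, 2*x/((t+n)^2 + x^2)) x := by
  set R : ℝ := |x| + 1 with hR
  have hxR : x ∈ Set.Ioo (-R) R := by
    constructor <;> [nlinarith [abs_nonneg x, neg_abs_le x]; nlinarith [le_abs_self x]]
  refine hasDerivAt_tsum_of_isPreconnected
    (u := fun n : ℕ => 2*R * ((t+n)^2)⁻¹)
    (g' := fun (n : ℕ) (y : ℝ) => 2*y/((t+n)^2 + y^2))
    ((aux_summable_inv_sq t ht).mul_left (2*R)) isOpen_Ioo
    (convex_Ioo (-R) R).isPreconnected
    (fun n y _ => ?_) (fun n y hy => ?_)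
    (y₀ := 0) ⟨by nlinarith [abs_nonneg x], by nlinarith [abs_nonneg x]⟩ ?_ hxR
  · -- HasDerivAt
    have hc : (0:ℝ) < (t+n)^2 := by positivity
    have hd : HasDerivAt (fun y : ℝ => 1 + y^2/(t+n)^2) (2*y/(t+n)^2) y := by
      have := ((hasDerivAt_pow 2 y).div_const ((t+n)^2)).const_add 1
      simpa using this
    have hpos : (0:ℝ) < 1 + y^2/(t+n)^2 := by positivity
    have := hd.log hpos.ne'
    convert this using 1
    iterate 2 · rfl
    rw [div_div]
    congr 1
    field_simp
  · -- bound
    have hc : (0:ℝ) < (t+n)^2 := by positivity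
    have hyR : |y| ≤ R := by
      rcases hy with ⟨h1, h2⟩
      rw [abs_le]; constructor <;> linarith
    rw [Real.norm_eq_abs, abs_div, abs_of_pos (by positivity : (0:ℝ) < (t+n)^2 + y^2)]
    rw [abs_mul, _root_.abs_two]
    show 2 * |y| / ((t + n) ^ 2 + y ^ 2) ≤ 2 * R * ((t + n) ^ 2)⁻¹
    rw [← div_eq_mul_inv]
    have h1 : (0:ℝ) < (t+n)^2 + y^2 := by positivity
    have h2 : (t+n)^2 ≤ (t+n)^2 + y^2 := by nlinarith [sq_nonneg y]
    gcongr
  · -- summable at 0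
    simpa using summable_zero

/-- For every `t > 0`, the function `x ↦ |Γ(t+ix)|²` is strictly decreasing on `[0,∞)`;
moreover, for every `x > 0` its derivative equals
`−2|Γ(t+ix)|²·∑_{n=0}^∞ x/((t+n)²+x²)`, which is strictly negative. -/
theorem meixner_density_strictAnti (t : ℝ) (ht : 0 < t) :
    StrictAntiOn (fun x : ℝ =>
        ‖Complex.Gamma ((t : ℂ) + (x : ℂ) * Complex.I)‖ ^ 2) (Set.Ici 0) ∧
    ∀ x : ℝ, 0 < x →
      HasDerivAt (fun x : ℝ =>
          ‖Complex.Gamma ((t : ℂ) + (x : ℂ) * Complex.I)‖ ^ 2)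
        (-2 * ‖Complex.Gamma ((t : ℂ) + (x : ℂ) * Complex.I)‖ ^ 2 *
          ∑' n : ℕ, x / ((t + n) ^ 2 + x ^ 2)) x ∧
      -2 * ‖Complex.Gamma ((t : ℂ) + (x : ℂ) * Complex.I)‖ ^ 2 *
          (∑' n : ℕ, x / ((t + n) ^ 2 + x ^ 2)) < 0 := by
  have hG2 : (0:ℝ) < Real.Gamma t ^ 2 := by
    have := Real.Gamma_pos_of_pos ht
    positivity
  constructor
  · intro a ha b hb hab
    simp only [aux_key t _ ht]
    have hb0 : 0 < b := lt_of_le_of_lt ha hab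
    have hlt : (∑' n : ℕ, Real.log (1 + a^2/(t+n)^2)) < ∑' n : ℕ, Real.log (1 + b^2/(t+n)^2) := by
      refine Summable.tsum_lt_tsum (i := 0) (fun n => ?_) ?_
        (aux_summable_log t a ht) (aux_summable_log t b ht)
      · have hc : (0:ℝ) < (t+n)^2 := by positivity
        have h2 : a^2 ≤ b^2 := by nlinarith [Set.mem_Ici.mp ha]
        apply Real.log_le_log (by positivity)
        gcongr
      · have hc : (0:ℝ) < (t+(0:ℕ))^2 := by positivity
        have h2 : a^2 < b^2 := by nlinarith [Set.mem_Ici.mp ha]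
        apply Real.log_lt_log (by positivity)
        gcongr
    have := Real.exp_lt_exp.mpr (neg_lt_neg hlt)
    exact mul_lt_mul_of_pos_left this hG2
  · intro x hx
    have hD := aux_hasDerivAt_S t ht x
    have hder : HasDerivAt
        (fun y : ℝ => Real.Gamma t ^ 2 * Real.exp (-(∑' n : ℕ, Real.log (1 + y^2/(t+n)^2))))
        (Real.Gamma t ^ 2 * (Real.exp (-(∑' n : ℕ, Real.log (1 + x^2/(t+n)^2))) *
          -(∑' n : ℕ, 2*x/((t+n)^2 + x^2)))) x := (hD.neg.exp).const_mul _
    have hfun : (fun x : ℝ => ‖Complex.Gamma ((t : ℂ) + (x : ℂ) * Complex.I)‖ ^ 2)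
        = fun y : ℝ => Real.Gamma t ^ 2 * Real.exp (-(∑' n : ℕ, Real.log (1 + y^2/(t+n)^2))) :=
      funext fun y => aux_key t y ht
    have hD2 : (∑' n : ℕ, 2*x/((t+n)^2 + x^2)) = 2 * ∑' n : ℕ, x/((t+n)^2 + x^2) := by
      rw [← tsum_mul_left]
      exact tsum_congr fun n => by ring
    have hSumx : Summable fun n : ℕ => x / ((t+n)^2 + x^2) := by
      refine ((aux_summable_inv_sq t ht).mul_left x).of_nonneg_of_le
        (fun n => by positivity) fun n => ?_
      rw [← div_eq_mul_inv]
      have h1 : (0:ℝ) < (t+n)^2 := by positivity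
      have h2 : (t+n)^2 ≤ (t+n)^2 + x^2 := by nlinarith [sq_nonneg x]
      exact div_le_div_of_nonneg_left hx.le h1 h2
    have hpos : 0 < ∑' n : ℕ, x / ((t+n)^2 + x^2) := by
      refine Summable.tsum_pos hSumx (fun n => by positivity) 0 (by positivity)
    have hA : 0 < ‖Complex.Gamma ((t : ℂ) + (x : ℂ) * Complex.I)‖ ^ 2 := by
      have := Complex.Gamma_ne_zero_of_re_pos
        (s := (t : ℂ) + (x : ℂ) * Complex.I) (by simpa using ht)
      have := norm_pos_iff.mpr this
      positivity
    refine ⟨?_, ?_⟩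
    · rw [hfun]
      convert hder using 1
      rw [aux_key t x ht, hD2]
      ring
    · have : 0 < 2 * ‖Complex.Gamma ((t : ℂ) + (x : ℂ) * Complex.I)‖ ^ 2 *
          (∑' n : ℕ, x / ((t+n)^2 + x^2)) := by positivity
      linarith
end

section
/- Let p : ℝ → ℝ be a nonnegative continuously differentiable probability density (∫_ℝ p(x) dx = 1) such that p(−x) = p(x) for all x, p′(x) ≤ 0 for all x > 0, and p(x)·log x → 0 as x → +∞. Then for all real x > 0 and y > 0, the real part of the Cauchy transform is strictly positive: Re ∫_ℝ p(u)/((x + yi) − u) du > 0. -/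
open MeasureTheory

set_option maxHeartbeats 1000000 in
/-- If `p` is a nonnegative, continuously differentiable probability density which is
symmetric, nonincreasing on `(0,∞)`, and satisfies `p(x)·log x → 0` as `x → ∞`, then the
Cauchy transform has strictly positive real part at every point `x + yi` with `x, y > 0`. -/
theorem cauchy_re_pos_of_symm_decreasing (p : ℝ → ℝ)
    (hsmooth : ContDiff ℝ 1 p)
    (hnonneg : ∀ x : ℝ, 0 ≤ p x)
    (hprob : ∫ x : ℝ, p x = 1)
    (hsymm : ∀ x : ℝ, p (-x) = p x)
    (hdecr : ∀ x : ℝ, 0 < x → deriv p x ≤ 0)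
    (hlim : Filter.Tendsto (fun x : ℝ => p x * Real.log x) Filter.atTop (nhds 0)) :
    ∀ x y : ℝ, 0 < x → 0 < y →
      0 < (∫ u : ℝ, (p u : ℂ) / (((x : ℂ) + (y : ℂ) * Complex.I) - (u : ℂ))).re := by
  intro x y hx hy
  have hpcont : Continuous p := hsmooth.continuous
  set s : ℝ := x ^ 2 + y ^ 2 with hs_def
  have hspos : 0 < s := by positivity
  set r : ℝ := Real.sqrt s with hr_def
  have hr2 : r ^ 2 = s := Real.sq_sqrt hspos.le
  have hrpos : 0 < r := Real.sqrt_pos.mpr hspos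
  set c : ℝ := p r with hc_def
  have hA : ∀ u : ℝ, 0 < (x - u) ^ 2 + y ^ 2 := fun u => by positivity
  have hB : ∀ u : ℝ, 0 < (x + u) ^ 2 + y ^ 2 := fun u => by positivity
  set q : ℝ → ℝ := fun u => (x - u) / ((x - u) ^ 2 + y ^ 2) with hq_def
  set g : ℝ → ℝ := fun u => q u + q (-u) with hg_def
  have hD : ∀ u : ℝ, 0 < ((x - u) ^ 2 + y ^ 2) * ((x + u) ^ 2 + y ^ 2) :=
    fun u => mul_pos (hA u) (hB u)
  have hgeq : ∀ u : ℝ, g u = 2 * x * (s - u ^ 2) /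
      (((x - u) ^ 2 + y ^ 2) * ((x + u) ^ 2 + y ^ 2)) := by
    intro u
    simp only [hg_def, hq_def]
    have e2 : x - -u = x + u := by ring
    rw [e2, div_add_div _ _ (ne_of_gt (hA u)) (ne_of_gt (hB u)),
      div_eq_div_iff (ne_of_gt (hD u)) (ne_of_gt (hD u))]
    simp only [hs_def]; ring
  -- continuity
  have hqcont : Continuous q := by
    apply Continuous.div (by fun_prop) (by fun_prop)
    intro u; exact ne_of_gt (hA u)
  have hgcont : Continuous g := by
    simp only [hg_def]; fun_prop
  -- p is integrable
  have hpint : Integrable p := by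
    by_contra h
    rw [integral_undef h] at hprob
    norm_num at hprob
  -- lower bound for the denominator, numerator bound
  have hDlow : ∀ u : ℝ, y ^ 2 * (s + u ^ 2) ≤
      ((x - u) ^ 2 + y ^ 2) * ((x + u) ^ 2 + y ^ 2) := by
    intro u
    simp only [hs_def]
    nlinarith [sq_nonneg (x ^ 2 - u ^ 2), sq_nonneg (x * u), sq_nonneg y, sq_nonneg u, sq_nonneg x]
  have hnum : ∀ u : ℝ, |2 * x * (s - u ^ 2)| ≤ 2 * x * (s + u ^ 2) := by
    intro u
    rw [abs_le]
    constructor <;> nlinarith [sq_nonneg u, hspos]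
  have hgabs : ∀ u : ℝ, |g u| ≤ 2 * x * (s + u ^ 2) /
      (((x - u) ^ 2 + y ^ 2) * ((x + u) ^ 2 + y ^ 2)) := by
    intro u
    rw [hgeq u, abs_div, abs_of_pos (hD u)]
    gcongr
    exact hnum u
  -- uniform bound |g| ≤ 2x/y²
  have hgbdd : ∀ u : ℝ, |g u| ≤ 2 * x / y ^ 2 := by
    intro u
    refine (hgabs u).trans ?_
    rw [div_le_div_iff₀ (hD u) (by positivity)]
    nlinarith [hDlow u, hspos, sq_nonneg u,
      mul_le_mul_of_nonneg_left (hDlow u) (le_of_lt hx)]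
  -- decay bound |g u| ≤ C / (1 + u²)
  set C : ℝ := 2 * x / y ^ 2 * (1 + 4 * s) + 40 * x * (1 + 1 / (4 * s)) with hC_def
  have hC2nonneg : (0:ℝ) ≤ 40 * x * (1 + 1 / (4 * s)) := by positivity
  have hC1nonneg : (0:ℝ) ≤ 2 * x / y ^ 2 * (1 + 4 * s) := by positivity
  have hgdecay : ∀ u : ℝ, |g u| ≤ C / (1 + u ^ 2) := by
    intro u
    refine (hgabs u).trans ?_
    rw [div_le_div_iff₀ (hD u) (by positivity)]
    rcases le_or_gt (u ^ 2) (4 * s) with hcase | hcase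
    · -- bounded region
      calc 2 * x * (s + u ^ 2) * (1 + u ^ 2)
          ≤ 2 * x * (s + u ^ 2) * (1 + 4 * s) := by
            have hh1 : (1:ℝ) + u ^ 2 ≤ 1 + 4 * s := by linarith
            have hh2 : (0:ℝ) ≤ 2 * x * (s + u ^ 2) := by positivity
            exact mul_le_mul_of_nonneg_left hh1 hh2
        _ = 2 * x / y ^ 2 * (1 + 4 * s) * (y ^ 2 * (s + u ^ 2)) := by
            field_simp
        _ ≤ 2 * x / y ^ 2 * (1 + 4 * s) * (((x - u) ^ 2 + y ^ 2) * ((x + u) ^ 2 + y ^ 2)) :=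
            mul_le_mul_of_nonneg_left (hDlow u) hC1nonneg
        _ ≤ C * (((x - u) ^ 2 + y ^ 2) * ((x + u) ^ 2 + y ^ 2)) := by
            apply mul_le_mul_of_nonneg_right _ (hD u).le
            rw [hC_def]
            linarith
    · -- decay region
      have hDform : ((x - u) ^ 2 + y ^ 2) * ((x + u) ^ 2 + y ^ 2)
          = (u ^ 2 - s) ^ 2 + 4 * (y ^ 2 * u ^ 2) := by
        simp only [hs_def]; ring
      have hDge : (u ^ 2 - s) ^ 2 ≤ ((x - u) ^ 2 + y ^ 2) * ((x + u) ^ 2 + y ^ 2) := by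
        rw [hDform]; nlinarith [mul_nonneg (sq_nonneg y) (sq_nonneg u)]
      have hs4 : (0:ℝ) < 4 * s := by positivity
      have h1le : 1 ≤ u ^ 2 * (1 / (4 * s)) := by
        rw [mul_one_div]
        exact (one_le_div hs4).mpr hcase.le
      have hq4 : 9 / 16 * (u ^ 2 * u ^ 2) ≤ (u ^ 2 - s) ^ 2 := by
        nlinarith [hspos, hcase, sq_nonneg u]
      have h9 : (s + u ^ 2) * (1 + u ^ 2) ≤
          (5 / 4 * u ^ 2) * (u ^ 2 * (1 + 1 / (4 * s))) := by
        have ha : s + u ^ 2 ≤ 5 / 4 * u ^ 2 := by linarith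
        have hb : 1 + u ^ 2 ≤ u ^ 2 * (1 + 1 / (4 * s)) := by
          nlinarith [h1le, sq_nonneg u]
        exact mul_le_mul ha hb (by positivity) (by positivity)
      calc 2 * x * (s + u ^ 2) * (1 + u ^ 2)
          = 2 * x * ((s + u ^ 2) * (1 + u ^ 2)) := by ring
        _ ≤ 2 * x * ((5 / 4 * u ^ 2) * (u ^ 2 * (1 + 1 / (4 * s)))) := by
            gcongr
        _ = 5 / 2 * x * (1 + 1 / (4 * s)) * (u ^ 2 * u ^ 2) := by ring
        _ ≤ 40 * x * (1 + 1 / (4 * s)) * (9 / 16 * (u ^ 2 * u ^ 2)) := by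
            nlinarith [mul_nonneg (mul_nonneg hx.le (by positivity : (0:ℝ) ≤ 1 + 1/(4*s)))
              (mul_nonneg (sq_nonneg u) (sq_nonneg u))]
        _ ≤ 40 * x * (1 + 1 / (4 * s)) * ((u ^ 2 - s) ^ 2) :=
            mul_le_mul_of_nonneg_left hq4 hC2nonneg
        _ ≤ 40 * x * (1 + 1 / (4 * s)) *
              (((x - u) ^ 2 + y ^ 2) * ((x + u) ^ 2 + y ^ 2)) :=
            mul_le_mul_of_nonneg_left hDge hC2nonneg
        _ ≤ C * (((x - u) ^ 2 + y ^ 2) * ((x + u) ^ 2 + y ^ 2)) := by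
            apply mul_le_mul_of_nonneg_right _ (hD u).le
            rw [hC_def]; linarith
  -- integrability of g
  have hgint : Integrable g := by
    have hmaj : Integrable (fun u : ℝ => C * (1 + u ^ 2)⁻¹) :=
      integrable_inv_one_add_sq.const_mul C
    apply hmaj.mono' hgcont.aestronglyMeasurable
    filter_upwards with u
    rw [Real.norm_eq_abs, ← div_eq_mul_inv]
    exact hgdecay u
  -- integrability of p * g
  have hpgint : Integrable (fun u => p u * g u) := by
    apply (hpint.const_mul (2 * x / y ^ 2)).mono'
      (hpcont.mul hgcont).aestronglyMeasurable
    filter_upwards with u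
    rw [Real.norm_eq_abs, Pi.mul_apply, abs_mul, abs_of_nonneg (hnonneg u)]
    calc p u * |g u| ≤ p u * (2 * x / y ^ 2) :=
          mul_le_mul_of_nonneg_left (hgbdd u) (hnonneg u)
      _ = 2 * x / y ^ 2 * p u := by ring
  -- bound on q and integrability of p * q, p * q(-·)
  have hqbdd : ∀ v : ℝ, |q v| ≤ 1 / (2 * y) := by
    intro v
    simp only [hq_def]
    rw [abs_div, abs_of_pos (hA v)]
    rw [div_le_div_iff₀ (hA v) (by positivity)]
    nlinarith [sq_nonneg (|x - v| - y), sq_abs (x - v), abs_nonneg (x - v)]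
  have hpq1 : Integrable (fun u => p u * q u) := by
    apply (hpint.const_mul (1 / (2 * y))).mono' (hpcont.mul hqcont).aestronglyMeasurable
    filter_upwards with u
    rw [Real.norm_eq_abs, Pi.mul_apply, abs_mul, abs_of_nonneg (hnonneg u)]
    calc p u * |q u| ≤ p u * (1 / (2 * y)) :=
          mul_le_mul_of_nonneg_left (hqbdd u) (hnonneg u)
      _ = 1 / (2 * y) * p u := by ring
  have hpq2 : Integrable (fun u => p u * q (-u)) := by
    apply (hpint.const_mul (1 / (2 * y))).mono'
      (hpcont.mul (hqcont.comp continuous_neg)).aestronglyMeasurable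
    filter_upwards with u
    rw [Real.norm_eq_abs, Pi.mul_apply, abs_mul, abs_of_nonneg (hnonneg u)]
    calc p u * |q (-u)| ≤ p u * (1 / (2 * y)) :=
          mul_le_mul_of_nonneg_left (hqbdd (-u)) (hnonneg u)
      _ = 1 / (2 * y) * p u := by ring
  -- the complex integrand
  have him : ∀ u : ℝ, (((x : ℂ) + (y : ℂ) * Complex.I) - (u : ℂ)).im = y := by
    intro u; simp
  have hrepart : ∀ u : ℝ, (((x : ℂ) + (y : ℂ) * Complex.I) - (u : ℂ)).re = x - u := by
    intro u; simp
  have hne : ∀ u : ℝ, (((x : ℂ) + (y : ℂ) * Complex.I) - (u : ℂ)) ≠ 0 := by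
    intro u h
    have h2 := congrArg Complex.im h
    rw [him u] at h2
    simp at h2
    exact hy.ne' h2
  have hFcont : Continuous (fun u : ℝ => (p u : ℂ) / (((x : ℂ) + (y : ℂ) * Complex.I) - (u : ℂ))) := by
    apply Continuous.div (by fun_prop) (by fun_prop) hne
  have hFint : Integrable (fun u : ℝ => (p u : ℂ) / (((x : ℂ) + (y : ℂ) * Complex.I) - (u : ℂ))) := by
    apply (hpint.const_mul y⁻¹).mono' hFcont.aestronglyMeasurable
    filter_upwards with u
    rw [norm_div, Complex.norm_real, Real.norm_eq_abs, abs_of_nonneg (hnonneg u)]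
    have h1 : y ≤ ‖((x : ℂ) + (y : ℂ) * Complex.I) - (u : ℂ)‖ := by
      calc y = |(((x : ℂ) + (y : ℂ) * Complex.I) - (u : ℂ)).im| := by
            rw [him u]; exact (abs_of_pos hy).symm
        _ ≤ ‖((x : ℂ) + (y : ℂ) * Complex.I) - (u : ℂ)‖ := Complex.abs_im_le_norm _
        _ = ‖((x : ℂ) + (y : ℂ) * Complex.I) - (u : ℂ)‖ := rfl
    calc p u / ‖((x : ℂ) + (y : ℂ) * Complex.I) - (u : ℂ)‖ ≤ p u / y :=
          div_le_div_of_nonneg_left (hnonneg u) hy h1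
      _ = y⁻¹ * p u := by rw [div_eq_mul_inv]; ring
  -- real part of the integrand
  have hre : ∀ u : ℝ, ((p u : ℂ) / (((x : ℂ) + (y : ℂ) * Complex.I) - (u : ℂ))).re
      = p u * q u := by
    intro u
    rw [Complex.div_re, Complex.normSq_apply, hrepart u, him u]
    simp only [Complex.ofReal_re, Complex.ofReal_im, hq_def]
    rw [zero_mul, zero_div, add_zero, mul_div_assoc]
    congr 1
    · congr 1; ring
  have hre_int : (∫ u : ℝ, (p u : ℂ) / (((x : ℂ) + (y : ℂ) * Complex.I) - (u : ℂ))).re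
      = ∫ u, p u * q u := by
    have h1 := ContinuousLinearMap.integral_comp_comm Complex.reCLM hFint
    simp only [Complex.reCLM_apply] at h1
    rw [← h1]
    congr 1
    ext u
    exact hre u
  -- symmetrization
  have h2q : ∫ u, p u * g u = 2 * ∫ u, p u * q u := by
    have hsplit : ∫ u, p u * g u = (∫ u, p u * q u) + ∫ u, p u * q (-u) := by
      rw [← integral_add hpq1 hpq2]
      congr 1
      ext u
      simp only [hg_def]
      ring
    have hswap : (∫ u : ℝ, p u * q (-u)) = ∫ u, p u * q u := by
      calc (∫ u : ℝ, p u * q (-u)) = ∫ u : ℝ, (fun v : ℝ => p (-v) * q v) (-u) := by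
            congr 1; ext u; simp [neg_neg, hsymm]
        _ = ∫ v : ℝ, p (-v) * q v := integral_neg_eq_self (fun v : ℝ => p (-v) * q v) volume
        _ = ∫ v : ℝ, p v * q v := by simp only [hsymm]
    rw [hsplit, hswap]; ring
  -- the antiderivative of g and ∫ g = 0
  have hFanti : ∀ u : ℝ, HasDerivAt
      (fun t : ℝ => (1 / 2 : ℝ) * (Real.log ((x + t) ^ 2 + y ^ 2) - Real.log ((x - t) ^ 2 + y ^ 2)))
      (g u) u := by
    intro u
    have hid1 : HasDerivAt (fun t : ℝ => x + t) 1 u := (hasDerivAt_id u).const_add x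
    have h1 : HasDerivAt (fun t : ℝ => (x + t) ^ 2 + y ^ 2) (2 * (x + u)) u := by
      have := (hid1.pow 2).add_const (y ^ 2)
      simpa using this
    have hid2 : HasDerivAt (fun t : ℝ => x - t) (-1) u := (hasDerivAt_id u).const_sub x
    have h2 : HasDerivAt (fun t : ℝ => (x - t) ^ 2 + y ^ 2) (-(2 * (x - u))) u := by
      have := (hid2.pow 2).add_const (y ^ 2)
      refine this.congr_deriv ?_
      push_cast
      ring
    have h3 := (h1.log (hB u).ne').sub (h2.log (hA u).ne')
    have h4 := h3.const_mul (1 / 2 : ℝ)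
    refine h4.congr_deriv ?_
    rw [hgeq]
    field_simp
    ring
  have hFTC : ∀ R : ℝ, (∫ u in (-R)..R, g u)
      = Real.log ((x + R) ^ 2 + y ^ 2) - Real.log ((x - R) ^ 2 + y ^ 2) := by
    intro R
    rw [intervalIntegral.integral_eq_sub_of_hasDerivAt (fun u _ => hFanti u)
      hgint.intervalIntegrable]
    have e1 : (x + -R) ^ 2 + y ^ 2 = (x - R) ^ 2 + y ^ 2 := by ring
    have e2 : (x - -R) ^ 2 + y ^ 2 = (x + R) ^ 2 + y ^ 2 := by ring
    simp only [e1, e2]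
    ring
  have hlim0 : Filter.Tendsto
      (fun R : ℝ => Real.log ((x + R) ^ 2 + y ^ 2) - Real.log ((x - R) ^ 2 + y ^ 2))
      Filter.atTop (nhds 0) := by
    have hratio : Filter.Tendsto
        (fun R : ℝ => ((x + R) ^ 2 + y ^ 2) / ((x - R) ^ 2 + y ^ 2))
        Filter.atTop (nhds 1) := by
      have heq : ∀ R : ℝ, ((x + R) ^ 2 + y ^ 2) / ((x - R) ^ 2 + y ^ 2)
          = 1 + 4 * x * R / ((x - R) ^ 2 + y ^ 2) := by
        intro R
        have hBne : ((x - R) ^ 2 + y ^ 2) ≠ 0 := (hA R).ne'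
        field_simp
        ring
      simp only [heq]
      have h0 : Filter.Tendsto (fun R : ℝ => 4 * x * R / ((x - R) ^ 2 + y ^ 2))
          Filter.atTop (nhds 0) := by
        apply squeeze_zero' (g := fun R : ℝ => 16 * x / R)
        · filter_upwards [Filter.eventually_ge_atTop (0 : ℝ)] with R hR
          positivity
        · filter_upwards [Filter.eventually_ge_atTop (2 * x)] with R hR
          have hR0 : 0 < R := lt_of_lt_of_le (by positivity) hR
          rw [div_le_div_iff₀ (hA R) hR0]
          nlinarith [mul_nonneg (mul_nonneg hx.le (by linarith : (0:ℝ) ≤ 3 * R - 2 * x))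
            (by linarith : (0:ℝ) ≤ R - 2 * x), mul_nonneg hx.le (sq_nonneg y)]
        · exact Filter.Tendsto.div_atTop tendsto_const_nhds Filter.tendsto_id
      have := h0.const_add (1 : ℝ)
      simpa using this
    have hcomp := (Real.continuousAt_log one_ne_zero).tendsto.comp hratio
    rw [Real.log_one] at hcomp
    have heq2 : ∀ R : ℝ, Real.log ((x + R) ^ 2 + y ^ 2) - Real.log ((x - R) ^ 2 + y ^ 2)
        = Real.log (((x + R) ^ 2 + y ^ 2) / ((x - R) ^ 2 + y ^ 2)) := fun R =>
      (Real.log_div (ne_of_gt (hB R)) (ne_of_gt (hA R))).symm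
    simp only [heq2]
    exact hcomp
  have hIzero : ∫ u, g u = 0 := by
    have h1 : Filter.Tendsto (fun R : ℝ => ∫ u in (-R)..R, g u) Filter.atTop
        (nhds (∫ u, g u)) :=
      intervalIntegral_tendsto_integral hgint Filter.tendsto_neg_atTop_atBot Filter.tendsto_id
    have h2 : Filter.Tendsto (fun R : ℝ => ∫ u in (-R)..R, g u) Filter.atTop (nhds 0) := by
      simp only [hFTC]
      exact hlim0
    exact tendsto_nhds_unique h1 h2
  -- monotonicity of p
  have hanti : AntitoneOn p (Set.Ici 0) := by
    apply antitoneOn_of_deriv_nonpos (convex_Ici 0) hpcont.continuousOn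
    · rw [interior_Ici]
      exact fun u _ => ((hsmooth.differentiable one_ne_zero) u).differentiableWithinAt
    · rw [interior_Ici]
      exact fun u hu => hdecr u hu
  have hpabs : ∀ u : ℝ, p u = p |u| := by
    intro u
    rcases abs_cases u with ⟨h, _⟩ | ⟨h, _⟩
    · rw [h]
    · rw [h, hsymm]
  have hp_ge : ∀ u : ℝ, u ^ 2 ≤ s → c ≤ p u := by
    intro u h
    rw [hpabs u]
    have habs : |u| ≤ r := by
      rw [← Real.sqrt_sq_eq_abs, hr_def]
      exact Real.sqrt_le_sqrt h
    exact hanti (Set.mem_Ici.mpr (abs_nonneg u)) (Set.mem_Ici.mpr hrpos.le) habs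
  have hp_le : ∀ u : ℝ, s ≤ u ^ 2 → p u ≤ c := by
    intro u h
    rw [hpabs u]
    have habs : r ≤ |u| := by
      rw [← Real.sqrt_sq_eq_abs, hr_def]
      exact Real.sqrt_le_sqrt h
    exact hanti (Set.mem_Ici.mpr hrpos.le) (Set.mem_Ici.mpr (abs_nonneg u)) habs
  -- sign of g
  have hg_nonneg : ∀ u : ℝ, u ^ 2 ≤ s → 0 ≤ g u := by
    intro u h
    rw [hgeq]
    apply div_nonneg _ (hD u).le
    nlinarith
  have hg_nonpos : ∀ u : ℝ, s ≤ u ^ 2 → g u ≤ 0 := by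
    intro u h
    rw [hgeq]
    apply div_nonpos_of_nonpos_of_nonneg _ (hD u).le
    nlinarith
  -- pointwise nonnegativity of φ = (p - c) g
  have hphi_nonneg : ∀ u : ℝ, 0 ≤ (p u - c) * g u := by
    intro u
    rcases le_total (u ^ 2) s with h | h
    · exact mul_nonneg (by linarith [hp_ge u h]) (hg_nonneg u h)
    · have h1 := mul_nonneg (neg_nonneg.mpr (by linarith [hp_le u h] : p u - c ≤ 0))
        (neg_nonneg.mpr (hg_nonpos u h))
      nlinarith [h1]
  -- integrability of φ
  have hphi_int : Integrable (fun u => (p u - c) * g u) := by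
    have heq : (fun u => (p u - c) * g u) = fun u => p u * g u - c * g u := by
      ext u; ring
    rw [heq]
    exact hpgint.sub (hgint.const_mul c)
  have hphi_eq : ∫ u, (p u - c) * g u = ∫ u, p u * g u := by
    have heq : (fun u => (p u - c) * g u) = fun u => p u * g u - c * g u := by
      ext u; ring
    rw [heq, integral_sub hpgint (hgint.const_mul c), integral_const_mul, hIzero,
      mul_zero, sub_zero]
  -- p is not identically c
  have hnotall : ¬ ∀ u : ℝ, p u = c := by
    intro hall
    have hpeq : p = fun _ => c := funext hall
    rw [hpeq] at hpint hprob
    rcases integrable_const_iff.mp hpint with h0 | hfin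
    · rw [h0] at hprob
      simp at hprob
    · have hfin' := hfin.measure_univ_lt_top
      rw [Real.volume_univ] at hfin'
      exact absurd hfin' (lt_irrefl _)
  obtain ⟨u₀, hu₀⟩ := not_forall.mp hnotall
  -- positivity of the integral of φ
  have hSopen : IsOpen {u : ℝ | p u ≠ c} :=
    (isClosed_singleton.preimage hpcont).isOpen_compl
  have hSpos : 0 < volume {u : ℝ | p u ≠ c} :=
    hSopen.measure_pos volume ⟨u₀, hu₀⟩
  have hnull : volume ({r, -r} : Set ℝ) = 0 :=
    (Set.toFinite ({r, -r} : Set ℝ)).measure_zero volume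
  have hsub : {u : ℝ | p u ≠ c} \ {r, -r} ⊆
      Function.support (fun u => (p u - c) * g u) := by
    rintro u ⟨hu1, hu2⟩
    simp only [Function.mem_support]
    intro h0
    rcases mul_eq_zero.mp h0 with h | h
    · exact hu1 (by linarith [sub_eq_zero.mp h])
    · rw [hgeq] at h
      rcases div_eq_zero_iff.mp h with h2 | h2
      · have hu2' : u ^ 2 = s := by nlinarith [h2]
        have : (u - r) * (u + r) = 0 := by nlinarith [hr2, hu2']
        rcases mul_eq_zero.mp this with h3 | h3
        · exact hu2 (by left; linarith)
        · exact hu2 (by right; simp only [Set.mem_singleton_iff]; linarith)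
      · exact absurd h2 (hD u).ne'
  have hsupp_pos : 0 < volume (Function.support (fun u => (p u - c) * g u)) := by
    have h1 : volume ({u : ℝ | p u ≠ c} \ {r, -r}) = volume {u : ℝ | p u ≠ c} :=
      measure_diff_null hnull
    calc (0 : ENNReal) < volume {u : ℝ | p u ≠ c} := hSpos
      _ = volume ({u : ℝ | p u ≠ c} \ {r, -r}) := h1.symm
      _ ≤ volume (Function.support (fun u => (p u - c) * g u)) := measure_mono hsub
  have hint_pos : 0 < ∫ u, (p u - c) * g u :=
    (integral_pos_iff_support_of_nonneg hphi_nonneg hphi_int).mpr hsupp_pos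
  -- conclusion
  rw [hre_int]
  have : 0 < ∫ u, p u * g u := by rw [← hphi_eq]; exact hint_pos
  linarith [h2q, this]
end

section
/- For every real x ≠ 0, Σ_{n=0}^∞ (x² − n²)/(x² + n²)² = (1/2)·(1/x² + (π/sinh(πx))²). -/
open Complex MeasureTheory Set intervalIntegral Real

noncomputable section
namespace SumSqAux

def phi (x t : ℝ) : ℝ := Real.cosh (2 * π * x * (t - 1/2))

lemma sub_two_pi_I_ne (r : ℝ) (hr : r ≠ 0) (n : ℤ) : (r : ℂ) - 2 * π * I * n ≠ 0 := by
  intro h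
  have := congrArg Complex.re h
  simp [Complex.ext_iff] at this
  exact hr this

lemma integral_exp_sub (r : ℝ) (hr : r ≠ 0) (n : ℤ) :
    ∫ t in (0:ℝ)..1, Complex.exp (((r : ℂ) - 2 * π * I * n) * t)
      = (Complex.exp r - 1) / ((r : ℂ) - 2 * π * I * n) := by
  rw [integral_exp_mul_complex (sub_two_pi_I_ne r hr n)]
  congr 1
  rw [Complex.ofReal_one, Complex.ofReal_zero, mul_one, mul_zero, Complex.exp_zero,
    Complex.exp_sub]
  rw [show (2 : ℂ) * π * I * n = n * (2 * π * I) by ring, Complex.exp_int_mul_two_pi_mul_I,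
    div_one]

end SumSqAux

namespace SumSqAux
open SumSqAux

lemma two_pi_x_ne (x : ℝ) (hx : x ≠ 0) : (2 * π * x : ℝ) ≠ 0 := by
  have := Real.pi_ne_zero; positivity

lemma sq_add_sq_ne (x : ℝ) (hx : x ≠ 0) (n : ℤ) : (x ^ 2 + (n : ℝ) ^ 2) ≠ 0 := by
  positivity

lemma fourierCoeffOn_cosh (x : ℝ) (hx : x ≠ 0) (n : ℤ) :
    fourierCoeffOn zero_lt_one (fun t => ((phi x t : ℝ) : ℂ)) n
      = ((x * Real.sinh (π * x) / (π * (x ^ 2 + (n : ℝ) ^ 2)) : ℝ) : ℂ) := by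
  rw [fourierCoeffOn_eq_integral]
  have hint : ∀ t : ℝ, (fourier (-n) ((t : ℝ) : AddCircle ((1:ℝ) - 0)) : ℂ) • ((phi x t : ℝ) : ℂ)
      = Complex.exp (-(π * x : ℝ)) / 2 * Complex.exp ((((2*π*x : ℝ) : ℂ) - 2*π*I*n) * t)
        + Complex.exp ((π * x : ℝ)) / 2
          * Complex.exp ((((-(2*π*x) : ℝ) : ℂ) - 2*π*I*n) * t) := by
    intro t
    rw [smul_eq_mul, fourier_coe_apply, phi, Complex.ofReal_cosh, Complex.cosh]
    rw [← mul_div_assoc, mul_add, ← Complex.exp_add, ← Complex.exp_add]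
    rw [div_mul_eq_mul_div, div_mul_eq_mul_div, ← Complex.exp_add, ← Complex.exp_add,
      ← add_div]
    congr 2 <;> push_cast <;> ring
  rw [intervalIntegral.integral_congr (μ := MeasureTheory.volume) (g := fun t => Complex.exp (-(π * x : ℝ)) / 2
        * Complex.exp ((((2*π*x : ℝ) : ℂ) - 2*π*I*n) * t)
        + Complex.exp ((π * x : ℝ)) / 2 * Complex.exp ((((-(2*π*x) : ℝ) : ℂ) - 2*π*I*n) * t))
      (fun t _ => hint t)]
  rw [intervalIntegral.integral_add
      ((Continuous.intervalIntegrable (by fun_prop) _ _))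
      ((Continuous.intervalIntegrable (by fun_prop) _ _)),
    intervalIntegral.integral_const_mul, intervalIntegral.integral_const_mul,
    integral_exp_sub _ (two_pi_x_ne x hx) n,
    integral_exp_sub _ (neg_ne_zero.mpr (two_pi_x_ne x hx)) n]
  have hc1 := sub_two_pi_I_ne _ (two_pi_x_ne x hx) n
  have hc2 := sub_two_pi_I_ne _ (neg_ne_zero.mpr (two_pi_x_ne x hx)) n
  have hπ : ((π : ℝ) : ℂ) ≠ 0 := Complex.ofReal_ne_zero.mpr Real.pi_ne_zero
  have hden : ((x : ℂ) ^ 2 + (n : ℂ) ^ 2) ≠ 0 := by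
    have : ((x : ℂ) ^ 2 + (n : ℂ) ^ 2) = ((x ^ 2 + (n : ℝ) ^ 2 : ℝ) : ℂ) := by push_cast; ring
    rw [this]
    exact Complex.ofReal_ne_zero.mpr (sq_add_sq_ne x hx n)
  have hexp : Complex.exp ((π : ℂ) * x) ≠ 0 := Complex.exp_ne_zero _
  push_cast at hc1 hc2 ⊢
  rw [Complex.sinh]
  rw [show Complex.exp (2 * (π : ℂ) * x) = Complex.exp ((π : ℂ) * x) * Complex.exp ((π : ℂ) * x)
      from by rw [← Complex.exp_add]; ring_nf]
  rw [show Complex.exp (-(2 * (π : ℂ) * x))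
        = (Complex.exp ((π : ℂ) * x))⁻¹ * (Complex.exp ((π : ℂ) * x))⁻¹
      from by rw [← Complex.exp_neg, ← Complex.exp_add]; ring_nf]
  rw [show Complex.exp (-((π : ℂ) * x)) = (Complex.exp ((π : ℂ) * x))⁻¹ from Complex.exp_neg _]
  rw [← mul_div_assoc, ← mul_div_assoc, div_add_div _ _ hc1 hc2]
  have hprod : (2 * (π : ℂ) * x - 2 * π * I * n) * (-(2 * (π : ℂ) * x) - 2 * π * I * n)
      = -(4 * (π : ℂ) ^ 2 * ((x : ℂ) ^ 2 + (n : ℂ) ^ 2)) := by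
    linear_combination (4 * (π : ℂ) ^ 2 * (n : ℂ) ^ 2) * Complex.I_sq
  rw [hprod]
  rw [show (1:ℝ)/(1-0) = 1 by norm_num, one_smul]
  rw [div_eq_div_iff (neg_ne_zero.mpr (mul_ne_zero (mul_ne_zero (by norm_num)
      (pow_ne_zero 2 hπ)) hden)) (mul_ne_zero hπ hden)]
  field_simp
  ring


lemma phi_endpoints (x : ℝ) : phi x 0 = phi x 1 := by
  have h0 : 2 * π * x * ((0:ℝ) - 1/2) = -(π * x) := by ring
  have h1 : 2 * π * x * ((1:ℝ) - 1/2) = π * x := by ring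
  rw [phi, phi, h0, h1, Real.cosh_neg]

lemma phi_cont (x : ℝ) : Continuous (phi x) := by
  unfold phi; fun_prop

lemma liftIco_cont (x : ℝ) : Continuous (AddCircle.liftIco 1 0 (phi x)) :=
  AddCircle.liftIco_zero_continuous (phi_endpoints x) (phi_cont x).continuousOn

/-- The function on the circle. -/
def G (x : ℝ) : C(UnitAddCircle, ℂ) :=
  ⟨fun z => ((AddCircle.liftIco 1 0 (phi x)) z : ℂ),
    Complex.continuous_ofReal.comp (liftIco_cont x)⟩

lemma coeff_G (x : ℝ) (hx : x ≠ 0) (n : ℤ) :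
    fourierCoeff (⇑(G x)) n
      = ((x * Real.sinh (π * x) / (π * (x ^ 2 + (n : ℝ) ^ 2)) : ℝ) : ℂ) := by
  have hGeq : ⇑(G x) = AddCircle.liftIco 1 0 (fun t => ((phi x t : ℝ) : ℂ)) := by
    ext1 z; rfl
  rw [hGeq, fourierCoeff_liftIco_eq]
  simpa only [zero_add] using fourierCoeffOn_cosh x hx n


lemma summable_nat_inv (x : ℝ) (hx : x ≠ 0) :
    Summable (fun n : ℕ => 1 / (x ^ 2 + (n : ℝ) ^ 2)) := by
  rw [← summable_nat_add_iff 1]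
  have hb : Summable (fun n : ℕ => 1 / ((n + 1 : ℝ)) ^ 2) := by
    have := (summable_nat_add_iff (f := fun n : ℕ => 1 / (n : ℝ) ^ 2) 1).mpr
      (Real.summable_one_div_nat_pow.mpr one_lt_two)
    simpa using this
  refine Summable.of_nonneg_of_le (fun n => by positivity) (fun n => ?_) hb
  apply one_div_le_one_div_of_le (by positivity)
  have : ((n : ℝ) + 1) ^ 2 = ((n + 1 : ℕ) : ℝ) ^ 2 := by push_cast; ring
  nlinarith [sq_nonneg x]

lemma summable_int_inv (x : ℝ) (hx : x ≠ 0) :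
    Summable (fun n : ℤ => 1 / (x ^ 2 + (n : ℝ) ^ 2)) := by
  apply Summable.of_nat_of_neg <;>
    simp only [Int.cast_natCast, Int.cast_neg, neg_sq] <;>
    exact summable_nat_inv x hx

lemma summable_int_inv_sq (x : ℝ) (hx : x ≠ 0) :
    Summable (fun n : ℤ => 1 / (x ^ 2 + (n : ℝ) ^ 2) ^ 2) := by
  refine Summable.of_nonneg_of_le (fun n => by positivity) (fun n => ?_)
    ((summable_int_inv x hx).mul_left (1 / x ^ 2))
  have h1 : (0:ℝ) < x ^ 2 + (n : ℝ) ^ 2 := by positivity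
  rw [div_mul_div_comm, one_mul]
  apply one_div_le_one_div_of_le (by positivity)
  nlinarith [sq_nonneg (n : ℝ), sq_nonneg x]

lemma hasSum_inv (x : ℝ) (hx : x ≠ 0) :
    HasSum (fun n : ℤ => x * Real.sinh (π * x) / (π * (x ^ 2 + (n : ℝ) ^ 2)))
      (Real.cosh (π * x)) := by
  have hsummable : Summable fun n : ℤ => fourierCoeff (⇑(G x)) n := by
    rw [funext (coeff_G x hx)]
    rw [Complex.summable_ofReal]
    have : ∀ n : ℤ, x * Real.sinh (π * x) / (π * (x ^ 2 + (n : ℝ) ^ 2))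
        = (x * Real.sinh (π * x) / π) * (1 / (x ^ 2 + (n : ℝ) ^ 2)) := by
      intro n; field_simp
    rw [funext this]
    exact (summable_int_inv x hx).mul_left _
  have h := has_pointwise_sum_fourier_series_of_summable hsummable (0 : UnitAddCircle)
  simp only [funext (coeff_G x hx), fourier_eval_zero, smul_eq_mul, mul_one] at h
  have hG0 : (G x) 0 = ((Real.cosh (π * x) : ℝ) : ℂ) := by
    show ((AddCircle.liftIco 1 0 (phi x)) 0 : ℂ) = _
    rw [show ((0 : UnitAddCircle)) = (((0:ℝ) : UnitAddCircle)) by norm_cast]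
    rw [AddCircle.liftIco_coe_apply (by norm_num : (0:ℝ) ∈ Set.Ico (0:ℝ) (0+1))]
    rw [phi, show 2 * π * x * ((0:ℝ) - 1/2) = -(π * x) by ring, Real.cosh_neg]
  rw [hG0] at h
  exact Complex.hasSum_ofReal.mp h


lemma integral_phi_sq (x : ℝ) (hx : x ≠ 0) :
    ∫ t in (0:ℝ)..1, (phi x t) ^ 2
      = 1 / 2 + Real.sinh (2 * π * x) / (4 * π * x) := by
  have hπ := Real.pi_ne_zero
  have hderiv : ∀ t ∈ Set.uIcc (0:ℝ) 1, HasDerivAt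
      (fun t : ℝ => t / 2 + Real.sinh (4 * π * x * (t - 1/2)) / (8 * π * x))
      ((phi x t) ^ 2) t := by
    intro t _
    have h1 : HasDerivAt (fun t : ℝ => 4 * π * x * (t - 1/2)) (4 * π * x) t := by
      have := ((hasDerivAt_id t).sub_const (1/2)).const_mul (4 * π * x)
      simp only [mul_one] at this; exact this
    have h2 := (Real.hasDerivAt_sinh (4 * π * x * (t - 1/2))).comp t h1
    have h3 := ((hasDerivAt_id t).div_const 2).add (h2.div_const (8 * π * x))
    convert h3 using 1
    · exact rfl
    · exact rfl
    · exact rfl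
    rw [phi, show 4 * π * x * (t - 1/2) = 2 * (2 * π * x * (t - 1/2)) by ring,
      Real.cosh_two_mul, Real.cosh_sq]
    field_simp
    ring
  rw [intervalIntegral.integral_eq_sub_of_hasDerivAt hderiv
    (((phi_cont x).pow 2).intervalIntegrable _ _)]
  rw [show 4 * π * x * ((1:ℝ) - 1/2) = 2 * π * x by ring,
    show 4 * π * x * ((0:ℝ) - 1/2) = -(2 * π * x) by ring, Real.sinh_neg]
  field_simp
  ring

lemma parseval_phi (x : ℝ) (hx : x ≠ 0) :
    ∑' n : ℤ, (x * Real.sinh (π * x) / (π * (x ^ 2 + (n : ℝ) ^ 2))) ^ 2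
      = 1 / 2 + Real.sinh (2 * π * x) / (4 * π * x) := by
  have key := tsum_sq_fourierCoeff (ContinuousMap.toLp 2 AddCircle.haarAddCircle ℂ (G x))
  have hcoeff : ∀ n : ℤ,
      ‖fourierCoeff (↑↑((ContinuousMap.toLp 2 AddCircle.haarAddCircle ℂ) (G x))) n‖ ^ 2
        = (x * Real.sinh (π * x) / (π * (x ^ 2 + (n : ℝ) ^ 2))) ^ 2 := by
    intro n
    rw [fourierCoeff_toLp, coeff_G x hx n, Complex.norm_real, Real.norm_eq_abs, _root_.sq_abs]
  simp only [hcoeff] at key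
  rw [key]
  have hae : (↑↑((ContinuousMap.toLp 2 AddCircle.haarAddCircle ℂ) (G x)) :
        UnitAddCircle → ℂ) =ᵐ[AddCircle.haarAddCircle] ⇑(G x) :=
    ContinuousMap.coeFn_toLp _ _
  rw [MeasureTheory.integral_congr_ae
    (hae.mono (fun z hz => by rw [show _ = _ from hz]))]
  have hvol : (MeasureTheory.volume : MeasureTheory.Measure UnitAddCircle)
      = AddCircle.haarAddCircle := by
    rw [AddCircle.volume_eq_smul_haarAddCircle]
    simp
  rw [← hvol]
  have := AddCircle.intervalIntegral_preimage 1 0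
    (fun z : UnitAddCircle => ‖(G x) z‖ ^ 2)
  rw [zero_add] at this
  rw [← this]
  rw [intervalIntegral.integral_congr (g := fun t : ℝ => (phi x t) ^ 2)]
  · exact integral_phi_sq x hx
  · intro t ht
    rw [Set.uIcc_of_le (by norm_num : (0:ℝ) ≤ 1)] at ht
    simp only []
    rcases eq_or_lt_of_le ht.2 with h1 | h1
    · show ‖((AddCircle.liftIco 1 0 (phi x) ↑t : ℝ) : ℂ)‖ ^ 2 = _
      rw [h1, show (((1:ℝ)) : UnitAddCircle) = (((0:ℝ)) : UnitAddCircle) by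
          rw [show ((1:ℝ) : UnitAddCircle) = 0 from AddCircle.coe_period 1,
            QuotientAddGroup.mk_zero]]
      rw [AddCircle.liftIco_coe_apply (by norm_num : (0:ℝ) ∈ Set.Ico (0:ℝ) (0+1)),
        phi_endpoints x, Complex.norm_real, Real.norm_eq_abs, _root_.sq_abs]
    · show ‖((AddCircle.liftIco 1 0 (phi x) ↑t : ℝ) : ℂ)‖ ^ 2 = _
      rw [AddCircle.liftIco_coe_apply (by exact ⟨ht.1, by simpa using h1⟩ :
          t ∈ Set.Ico (0:ℝ) (0+1)), Complex.norm_real, Real.norm_eq_abs, _root_.sq_abs]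


lemma hasSum_main (x : ℝ) (hx : x ≠ 0) :
    HasSum (fun n : ℤ => (x ^ 2 - (n : ℝ) ^ 2) / (x ^ 2 + (n : ℝ) ^ 2) ^ 2)
      (π ^ 2 / Real.sinh (π * x) ^ 2) := by
  have hπ := Real.pi_ne_zero
  have hsinh : Real.sinh (π * x) ≠ 0 :=
    Real.sinh_ne_zero.mpr (mul_ne_zero hπ hx)
  -- the second-order sum from Parseval
  have hsq : HasSum (fun n : ℤ => 1 / (x ^ 2 + (n : ℝ) ^ 2) ^ 2)
      ((1 / 2 + Real.sinh (2 * π * x) / (4 * π * x)) * (π / (x * Real.sinh (π * x))) ^ 2) := by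
    have hsum2 := summable_int_inv_sq x hx
    have htsum : (x * Real.sinh (π * x) / π) ^ 2 * ∑' n : ℤ, 1 / (x ^ 2 + (n : ℝ) ^ 2) ^ 2
        = 1 / 2 + Real.sinh (2 * π * x) / (4 * π * x) := by
      rw [← tsum_mul_left, ← parseval_phi x hx]
      apply tsum_congr
      intro n
      have := sq_add_sq_ne x hx n
      field_simp
    have h2 : ∑' n : ℤ, 1 / (x ^ 2 + (n : ℝ) ^ 2) ^ 2
        = (1 / 2 + Real.sinh (2 * π * x) / (4 * π * x)) * (π / (x * Real.sinh (π * x))) ^ 2 := by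
      rw [← htsum]
      field_simp
      try ring
    exact h2 ▸ hsum2.hasSum
  -- the first-order sum from pointwise convergence
  have hc : HasSum (fun n : ℤ => 1 / (x ^ 2 + (n : ℝ) ^ 2))
      (Real.cosh (π * x) * (π / (x * Real.sinh (π * x)))) := by
    have h := (hasSum_inv x hx).mul_left ((x * Real.sinh (π * x) / π)⁻¹)
    have heq : ∀ n : ℤ, (x * Real.sinh (π * x) / π)⁻¹
          * (x * Real.sinh (π * x) / (π * (x ^ 2 + (n : ℝ) ^ 2)))
        = 1 / (x ^ 2 + (n : ℝ) ^ 2) := by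
      intro n
      have := sq_add_sq_ne x hx n
      field_simp
    rw [funext heq] at h
    convert h using 1
    · exact rfl
    field_simp
    try ring
  have hcomb := (hsq.mul_left (2 * x ^ 2)).sub hc
  have heq : ∀ n : ℤ, 2 * x ^ 2 * (1 / (x ^ 2 + (n : ℝ) ^ 2) ^ 2) - 1 / (x ^ 2 + (n : ℝ) ^ 2)
      = (x ^ 2 - (n : ℝ) ^ 2) / (x ^ 2 + (n : ℝ) ^ 2) ^ 2 := by
    intro n
    have := sq_add_sq_ne x hx n
    field_simp
    ring
  rw [funext heq] at hcomb
  convert hcomb using 1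
  · exact rfl
  rw [show 2 * π * x = 2 * (π * x) by ring, Real.sinh_two_mul]
  field_simp
  ring

end SumSqAux

end

/-- For every real `x ≠ 0`,
`∑_{n=0}^∞ (x² − n²)/(x² + n²)² = (1/2)·(1/x² + (π/sinh(πx))²)`. -/
theorem sum_sq_sub_div_sq_add_sq (x : ℝ) (hx : x ≠ 0) :
    ∑' n : ℕ, (x ^ 2 - (n : ℝ) ^ 2) / (x ^ 2 + (n : ℝ) ^ 2) ^ 2
      = (1 / 2) * (1 / x ^ 2 + (Real.pi / Real.sinh (Real.pi * x)) ^ 2) := by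
  have hπ := Real.pi_ne_zero
  have hsinh : Real.sinh (π * x) ≠ 0 := Real.sinh_ne_zero.mpr (mul_ne_zero hπ hx)
  have h := (SumSqAux.hasSum_main x hx).nat_add_neg
  simp only [Int.cast_natCast, Int.cast_neg, Int.cast_zero, neg_sq] at h
  have h2 := h.div_const 2
  have heq : ∀ n : ℕ, ((x ^ 2 - (n : ℝ) ^ 2) / (x ^ 2 + (n : ℝ) ^ 2) ^ 2
        + (x ^ 2 - (n : ℝ) ^ 2) / (x ^ 2 + (n : ℝ) ^ 2) ^ 2) / 2
      = (x ^ 2 - (n : ℝ) ^ 2) / (x ^ 2 + (n : ℝ) ^ 2) ^ 2 := by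
    intro n; ring
  rw [funext heq] at h2
  rw [h2.tsum_eq]
  have h0 : (x ^ 2 - (0 : ℝ) ^ 2) / (x ^ 2 + (0 : ℝ) ^ 2) ^ 2 = 1 / x ^ 2 := by
    field_simp
    ring
  rw [h0]
  field_simp
  ring
end

section
/- For every real x ≠ 0, the imaginary part of the series extension of the logistic Cauchy transform evaluated on the line Im z = −1/2 is strictly positive: Im Σ_{n=1}^∞ i/((x − i/2) + (n − 1/2)i)² = Σ_{n=0}^∞ (x² − n²)/(x² + n²)² > 0. -/
open MeasureTheory Set Filter Topology

/-- `t * exp (-(y*t)) → 0` at infinity. -/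
lemma aux_tendsto_mul_exp {y : ℝ} (hy : 0 < y) :
    Tendsto (fun t : ℝ => t * Real.exp (-(y * t))) atTop (𝓝 0) := by
  have h1 : Tendsto (fun s : ℝ => (1 / y) * (s * Real.exp (-s))) atTop (𝓝 0) := by
    have := Real.tendsto_pow_mul_exp_neg_atTop_nhds_zero 1
    simpa using this.const_mul (1 / y)
  have h2 : Tendsto (fun t : ℝ => y * t) atTop atTop :=
    Tendsto.const_mul_atTop hy tendsto_id
  refine (h1.comp h2).congr fun t => ?_
  simp only [Function.comp]
  field_simp

lemma aux_tendsto_exp {y : ℝ} (hy : 0 < y) :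
    Tendsto (fun t : ℝ => Real.exp (-(y * t))) atTop (𝓝 0) := by
  have h2 : Tendsto (fun t : ℝ => y * t) atTop atTop :=
    Tendsto.const_mul_atTop hy tendsto_id
  exact (Real.tendsto_exp_neg_atTop_nhds_zero.comp h2).congr fun t => rfl

/-- Integrability of `t * exp (-(y*t))` on `(0, ∞)`. -/
lemma aux_integrable_mul_exp {y : ℝ} (hy : 0 < y) :
    IntegrableOn (fun t : ℝ => t * Real.exp (-(y * t))) (Ioi 0) := by
  have hderiv : ∀ t ∈ Ici (0:ℝ),
      HasDerivAt (fun t : ℝ => -(t / y + 1 / y ^ 2) * Real.exp (-(y * t)))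
        (t * Real.exp (-(y * t))) t := by
    intro t _
    have h1 : HasDerivAt (fun t : ℝ => -(t / y + 1 / y ^ 2)) (-(1 / y)) t :=
      (((hasDerivAt_id t).div_const y).add_const (1 / y ^ 2)).neg
    have hin : HasDerivAt (fun t : ℝ => -(y * t)) (-(y * 1)) t :=
      ((hasDerivAt_id t).const_mul y).neg
    rw [mul_one] at hin
    have h2 : HasDerivAt (fun t : ℝ => Real.exp (-(y * t)))
        (Real.exp (-(y * t)) * -y) t := (Real.hasDerivAt_exp _).comp t hin
    have h3 := h1.mul h2
    refine h3.congr_deriv ?_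
    field_simp
    ring
  have htend : Tendsto (fun t : ℝ => -(t / y + 1 / y ^ 2) * Real.exp (-(y * t)))
      atTop (𝓝 0) := by
    have h1 := (aux_tendsto_mul_exp hy).const_mul (-(1/y))
    rw [mul_zero] at h1
    have h2 := (aux_tendsto_exp hy).const_mul (-(1/y^2))
    rw [mul_zero] at h2
    have h3 := h1.add h2
    rw [add_zero] at h3
    refine h3.congr fun t => ?_
    ring
  exact integrableOn_Ioi_deriv_of_nonneg' hderiv
    (fun t ht => mul_nonneg (le_of_lt ht) (Real.exp_nonneg _)) htend

/-- The Laplace integral `∫_0^∞ t e^{-z t} dt = 1/z²` for `Re z > 0`. -/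
lemma aux_laplace {z : ℂ} (hz : 0 < z.re) :
    ∫ t : ℝ in Ioi 0, (t : ℂ) * Complex.exp (-(z * t)) = 1 / z ^ 2 := by
  have hzne : z ≠ 0 := fun h => by simp [h] at hz
  set F : ℝ → ℂ := fun t => -((t : ℂ) / z + 1 / z ^ 2) * Complex.exp (-(z * t)) with hF
  have hrezt : ∀ t : ℝ, (-(z * t)).re = -(z.re * t) := by
    intro t
    simp [Complex.mul_re]
  have hint : IntegrableOn (fun t : ℝ => (t : ℂ) * Complex.exp (-(z * t))) (Ioi 0) := by
    refine (aux_integrable_mul_exp hz).mono' ?_ ?_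
    · apply Continuous.aestronglyMeasurable
      fun_prop
    · filter_upwards [ae_restrict_mem measurableSet_Ioi] with t ht
      have h1 : ‖(t : ℂ) * Complex.exp (-(z * t))‖ = |t| * Real.exp (-(z.re * t)) := by
        rw [norm_mul, Complex.norm_real, Real.norm_eq_abs,
          Complex.norm_exp, hrezt]
      rw [h1, abs_of_pos ht]
  have hderiv : ∀ t ∈ Ici (0:ℝ), HasDerivAt F ((t : ℂ) * Complex.exp (-(z * t))) t := by
    intro t _
    have h1 : HasDerivAt (fun w : ℂ => -(w / z + 1 / z ^ 2) * Complex.exp (-(z * w)))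
        ((t : ℂ) * Complex.exp (-(z * t))) (t : ℂ) := by
      have ha : HasDerivAt (fun w : ℂ => -(w / z + 1 / z ^ 2)) (-(1 / z)) (t : ℂ) :=
        (((hasDerivAt_id (t:ℂ)).div_const z).add_const ((1:ℂ) / z ^ 2)).neg
      have hin : HasDerivAt (fun w : ℂ => -(z * w)) (-(z * 1)) (t : ℂ) :=
        ((hasDerivAt_id (t:ℂ)).const_mul z).neg
      rw [mul_one] at hin
      have hb : HasDerivAt (fun w : ℂ => Complex.exp (-(z * w)))
          (Complex.exp (-(z * t)) * -z) (t : ℂ) := (Complex.hasDerivAt_exp _).comp _ hin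
      have h3 := ha.mul hb
      refine h3.congr_deriv ?_
      field_simp
      ring
    exact h1.comp_ofReal
  have htend : Tendsto F atTop (𝓝 0) := by
    have hb : Tendsto (fun t : ℝ => (t * ‖1/z‖ + ‖1/z^2‖) * Real.exp (-(z.re * t)))
        atTop (𝓝 0) := by
      have h1 := (aux_tendsto_mul_exp hz).const_mul ‖1/z‖
      rw [mul_zero] at h1
      have h2 := (aux_tendsto_exp hz).const_mul ‖1/z^2‖
      rw [mul_zero] at h2
      have h3 := h1.add h2
      rw [add_zero] at h3
      refine h3.congr fun t => ?_
      ring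
    refine squeeze_zero_norm' ?_ hb
    filter_upwards [eventually_ge_atTop (0:ℝ)] with t ht
    have hnorm : ‖F t‖ = ‖(t : ℂ) / z + 1 / z ^ 2‖ * Real.exp (-(z.re * t)) := by
      rw [hF]
      simp only []
      rw [norm_mul, norm_neg]
      congr 1
      rw [Complex.norm_exp, hrezt]
    rw [hnorm]
    gcongr
    refine (norm_add_le _ _).trans ?_
    gcongr
    rw [norm_div]
    simp only [Complex.norm_real, Real.norm_eq_abs, abs_of_nonneg ht]
    rw [div_eq_mul_inv, one_div, norm_inv]
  have hval := integral_Ioi_of_hasDerivAt_of_tendsto' hderiv hint htend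
  rw [hval]
  have hF0 : F 0 = -(1 / z ^ 2) := by simp [hF]
  rw [hF0]
  ring

/-- Real part of the Laplace integral: the key term formula. -/
lemma aux_term_formula {y : ℝ} (hy : 0 < y) (b : ℝ) :
    (y ^ 2 - b ^ 2) / (y ^ 2 + b ^ 2) ^ 2
      = ∫ t : ℝ in Ioi 0, t * Real.exp (-(y * t)) * Real.cos (b * t) := by
  set z : ℂ := (y : ℂ) + (b : ℂ) * Complex.I with hz
  have hzre : z.re = y := by simp [hz]
  have hzim : z.im = b := by simp [hz]
  have hre : 0 < z.re := by rw [hzre]; exact hy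
  have hrezt : ∀ t : ℝ, (-(z * t)).re = -(z.re * t) := by
    intro t
    simp [Complex.mul_re]
  have hint : IntegrableOn (fun t : ℝ => (t : ℂ) * Complex.exp (-(z * t))) (Ioi 0) := by
    refine (aux_integrable_mul_exp hre).mono' ?_ ?_
    · apply Continuous.aestronglyMeasurable; fun_prop
    · filter_upwards [ae_restrict_mem measurableSet_Ioi] with t ht
      have h1 : ‖(t : ℂ) * Complex.exp (-(z * t))‖ = |t| * Real.exp (-(z.re * t)) := by
        rw [norm_mul, Complex.norm_real, Real.norm_eq_abs,
          Complex.norm_exp, hrezt]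
      rw [h1, abs_of_pos ht]
  have h := aux_laplace hre
  have hRe : ∫ t : ℝ in Ioi 0, ((t : ℂ) * Complex.exp (-(z * t))).re = (1 / z ^ 2).re := by
    have h2 := ContinuousLinearMap.integral_comp_comm Complex.reCLM hint
    simpa using h2.trans (congrArg Complex.re h)
  have hL : ∫ t : ℝ in Ioi 0, ((t : ℂ) * Complex.exp (-(z * t))).re
      = ∫ t : ℝ in Ioi 0, t * Real.exp (-(y * t)) * Real.cos (b * t) := by
    refine setIntegral_congr_fun measurableSet_Ioi fun t _ => ?_
    have h1 : ((t : ℂ) * Complex.exp (-(z * t))).re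
        = t * (Complex.exp (-(z * t))).re := by
      rw [Complex.mul_re]
      simp
    rw [h1, Complex.exp_re, hrezt, hzre]
    have h3 : (-(z * t)).im = -(b * t) := by
      simp [Complex.mul_im, hzim]
    rw [h3, Real.cos_neg]
    ring
  have hR : (1 / z ^ 2).re = (y ^ 2 - b ^ 2) / (y ^ 2 + b ^ 2) ^ 2 := by
    rw [one_div, Complex.inv_re]
    have h1 : (z ^ 2).re = y ^ 2 - b ^ 2 := by
      rw [sq, Complex.mul_re, hzre, hzim]; ring
    have h2 : Complex.normSq (z ^ 2) = (y ^ 2 + b ^ 2) ^ 2 := by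
      rw [map_pow]
      congr 1
      rw [hz, Complex.normSq_add_mul_I]
    rw [h1, h2]
  rw [hL] at hRe
  rw [hR] at hRe
  exact hRe.symm

lemma aux_norm_w {r : ℝ} (hr0 : 0 ≤ r) (t : ℝ) :
    ‖(r : ℂ) * Complex.exp (-(t : ℂ) * Complex.I)‖ = r := by
  have hre0 : ((-(t:ℂ)) * Complex.I).re = 0 := by simp
  rw [norm_mul, Complex.norm_real, Complex.norm_exp, hre0]
  simp [abs_of_nonneg hr0]

/-- The geometric cosine sum. -/
lemma aux_geom_hasSum {r : ℝ} (hr0 : 0 ≤ r) (hr1 : r < 1) (t : ℝ) :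
    HasSum (fun n : ℕ => r ^ n * Real.cos (n * t))
      (((1 : ℂ) - (r : ℂ) * Complex.exp (-(t : ℂ) * Complex.I))⁻¹).re := by
  set w : ℂ := (r : ℂ) * Complex.exp (-(t : ℂ) * Complex.I) with hw
  have hnw : ‖w‖ < 1 := by rw [hw, aux_norm_w hr0]; exact hr1
  have hgeo : HasSum (fun n : ℕ => w ^ n) ((1 - w)⁻¹) :=
    hasSum_geometric_of_norm_lt_one hnw
  have hre := Complex.reCLM.hasSum hgeo
  refine hre.congr_fun fun n => ?_
  have hwn : w ^ n = (↑(r ^ n) : ℂ) * Complex.exp ((↑(-(n * t)) : ℝ) * Complex.I) := by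
    rw [hw, mul_pow, ← Complex.exp_nat_mul]
    push_cast
    ring_nf
  simp only [Complex.reCLM_apply]
  rw [hwn, Complex.re_ofReal_mul, Complex.exp_ofReal_mul_I_re, Real.cos_neg]

lemma aux_geom_half {r : ℝ} (hr0 : 0 ≤ r) (hr1 : r < 1) (t : ℝ) :
    (1 : ℝ) / 2 ≤ (((1 : ℂ) - (r : ℂ) * Complex.exp (-(t : ℂ) * Complex.I))⁻¹).re := by
  set w : ℂ := (r : ℂ) * Complex.exp (-(t : ℂ) * Complex.I) with hw
  have hnw : ‖w‖ = r := aux_norm_w hr0 t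
  have hne : (1 : ℂ) - w ≠ 0 := by
    intro h
    have h1 : (1:ℂ) = w := by linear_combination h
    rw [← h1] at hnw
    simp at hnw
    exact absurd (hnw ▸ hr1) (lt_irrefl _)
  have hpos : 0 < Complex.normSq (1 - w) := Complex.normSq_pos.mpr hne
  have hnsq : Complex.normSq w = r ^ 2 := by
    rw [← Complex.sq_norm, hnw]
  rw [Complex.inv_re, le_div_iff₀ hpos]
  have hexp : Complex.normSq (1 - w) = 1 - 2 * w.re + Complex.normSq w := by
    simp only [Complex.normSq_apply, Complex.sub_re, Complex.sub_im, Complex.one_re,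
      Complex.one_im]
    ring
  have h1w : (1 - w).re = 1 - w.re := by simp
  rw [h1w, hexp, hnsq]
  nlinarith [sq_nonneg r]

/-- Summability of the bounding series. -/
lemma aux_summable_bound (y : ℝ) :
    Summable (fun n : ℕ => (y ^ 2 + (n:ℝ) ^ 2)⁻¹) := by
  rw [← summable_nat_add_iff 1]
  have hbase : Summable (fun n : ℕ => ((((n:ℝ) + 1)) ^ 2)⁻¹) := by
    have h1 : Summable (fun n : ℕ => (((n:ℝ)) ^ 2)⁻¹) :=
      Real.summable_nat_pow_inv.mpr one_lt_two
    have h2 := (summable_nat_add_iff 1).mpr h1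
    refine h2.congr fun n => ?_
    push_cast
    rfl
  refine hbase.of_nonneg_of_le (fun n => by positivity) fun n => ?_
  have hle : ((n:ℝ) + 1) ^ 2 ≤ y ^ 2 + ((n:ℕ) + 1 : ℕ) ^ 2 := by
    push_cast
    nlinarith [sq_nonneg y]
  exact inv_anti₀ (by positivity) hle

/-- Positivity of the lower bound integral. -/
lemma aux_int_pos {y : ℝ} (hy : 0 < y) :
    0 < ∫ t : ℝ in Ioi 0, t * Real.exp (-(y * t)) / 2 := by
  have hint : IntegrableOn (fun t : ℝ => t * Real.exp (-(y * t)) / 2) (Ioi 0) :=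
    (aux_integrable_mul_exp hy).div_const 2
  rw [setIntegral_pos_iff_support_of_nonneg_ae ?_ hint]
  · have hsupp : (Function.support fun t : ℝ => t * Real.exp (-(y * t)) / 2) ∩ Ioi 0
        = Ioi 0 := by
      rw [inter_eq_right]
      intro t ht
      have ht' : (0:ℝ) < t := ht
      have h1 : (0:ℝ) < t * Real.exp (-(y * t)) / 2 := by positivity
      exact h1.ne'
    rw [hsupp]
    simp [Real.volume_Ioi]
  · refine eventually_of_mem (self_mem_ae_restrict measurableSet_Ioi) fun t ht => ?_
    have ht' : (0:ℝ) < t := ht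
    positivity

/-- Lower bound for the Abel-summed series. -/
lemma aux_abel_lower {y r : ℝ} (hy : 0 < y) (hr0 : 0 < r) (hr1 : r < 1) :
    (∫ t : ℝ in Ioi 0, t * Real.exp (-(y * t)) / 2)
      ≤ ∑' n : ℕ, ((y ^ 2 - (n:ℝ) ^ 2) / (y ^ 2 + (n:ℝ) ^ 2) ^ 2) * r ^ n := by
  set u : ℕ → ℝ → ℝ := fun n t => r ^ n * (t * Real.exp (-(y * t)) * Real.cos (n * t))
    with hu
  have hintA := aux_integrable_mul_exp hy
  have habs : ∀ (n : ℕ) (t : ℝ), 0 < t →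
      |u n t| ≤ r ^ n * (t * Real.exp (-(y * t))) := by
    intro n t ht
    have h1 : |u n t| = r ^ n * ((t * Real.exp (-(y * t))) * |Real.cos ((n:ℝ) * t)|) := by
      rw [hu]
      rw [abs_mul, abs_pow, abs_of_nonneg hr0.le, abs_mul, abs_mul, abs_of_pos ht,
        abs_of_nonneg (Real.exp_nonneg _)]
    rw [h1]
    have h2 : |Real.cos ((n:ℝ) * t)| ≤ 1 := Real.abs_cos_le_one _
    have h3 : (0:ℝ) ≤ r ^ n := pow_nonneg hr0.le n
    have h4 : (0:ℝ) ≤ t * Real.exp (-(y * t)) := mul_nonneg ht.le (Real.exp_nonneg _)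
    have h5 := mul_le_mul_of_nonneg_left (mul_le_mul_of_nonneg_left h2 h4) h3
    simpa [mul_one] using h5
  have hucont : ∀ n, Continuous (u n) := by intro n; fun_prop
  have huint : ∀ n : ℕ, IntegrableOn (u n) (Ioi 0) := by
    intro n
    refine hintA.mono' (hucont n).aestronglyMeasurable ?_
    filter_upwards [ae_restrict_mem measurableSet_Ioi] with t ht
    have ht' : (0:ℝ) < t := ht
    refine (habs n t ht').trans ?_
    have h4 : (0:ℝ) ≤ t * Real.exp (-(y * t)) := mul_nonneg ht'.le (Real.exp_nonneg _)
    have h6 := mul_le_mul_of_nonneg_right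
      (pow_le_one₀ hr0.le hr1.le : r ^ n ≤ 1) h4
    rwa [one_mul] at h6
  have hterm : ∀ n : ℕ, ((y ^ 2 - (n:ℝ) ^ 2) / (y ^ 2 + (n:ℝ) ^ 2) ^ 2) * r ^ n
      = ∫ t : ℝ in Ioi 0, u n t := by
    intro n
    show _ = ∫ t : ℝ in Ioi 0, r ^ n * (t * Real.exp (-(y * t)) * Real.cos ((n:ℝ) * t))
    rw [integral_const_mul, ← aux_term_formula hy (n:ℝ)]
    exact mul_comm _ _
  have hnormint : ∀ n : ℕ,
      (∫ t in Ioi 0, ‖u n t‖) ≤ r ^ n * ∫ t in Ioi 0, t * Real.exp (-(y * t)) := by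
    intro n
    rw [← integral_const_mul]
    refine setIntegral_mono_on ((huint n).norm) (hintA.const_mul _) measurableSet_Ioi
      fun t ht => ?_
    have ht' : (0:ℝ) < t := ht
    rw [Real.norm_eq_abs]
    exact habs n t ht'
  have hsumnorm : Summable (fun n : ℕ => ∫ t in Ioi 0, ‖u n t‖) := by
    refine Summable.of_nonneg_of_le (fun n => integral_nonneg fun t => norm_nonneg _)
      hnormint ?_
    exact (summable_geometric_of_lt_one hr0.le hr1).mul_right _
  have hswap := MeasureTheory.integral_tsum_of_summable_integral_norm
    (fun n => huint n) hsumnorm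
  have hG : (fun t : ℝ => ∑' n : ℕ, u n t)
      = fun t : ℝ => t * Real.exp (-(y * t)) *
        (((1 : ℂ) - (r : ℂ) * Complex.exp (-(t : ℂ) * Complex.I))⁻¹).re := by
    funext t
    have h1 := (aux_geom_hasSum hr0.le hr1 t).mul_left (t * Real.exp (-(y * t)))
    refine HasSum.tsum_eq ?_
    refine h1.congr_fun fun n => ?_
    rw [hu]
    ring
  have hgoal : ∑' n : ℕ, ((y ^ 2 - (n:ℝ) ^ 2) / (y ^ 2 + (n:ℝ) ^ 2) ^ 2) * r ^ n
      = ∫ t : ℝ in Ioi 0, t * Real.exp (-(y * t)) *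
        (((1 : ℂ) - (r : ℂ) * Complex.exp (-(t : ℂ) * Complex.I))⁻¹).re := by
    rw [tsum_congr hterm, hswap, hG]
  rw [hgoal]
  have hcont2 : Continuous (fun t : ℝ =>
      ((1 : ℂ) - (r : ℂ) * Complex.exp (-(t : ℂ) * Complex.I))⁻¹) := by
    refine Continuous.inv₀ (by fun_prop) fun t => ?_
    intro h
    have h1 : (1:ℂ) = (r : ℂ) * Complex.exp (-(t : ℂ) * Complex.I) := by
      linear_combination h
    have h2 := congrArg norm h1
    rw [aux_norm_w hr0.le] at h2
    simp at h2
    exact absurd (h2 ▸ hr1) (lt_irrefl _)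
  have hGcont : Continuous (fun t : ℝ => t * Real.exp (-(y * t)) *
      (((1 : ℂ) - (r : ℂ) * Complex.exp (-(t : ℂ) * Complex.I))⁻¹).re) := by
    refine Continuous.mul (by fun_prop) ?_
    exact Complex.continuous_re.comp hcont2
  have hGint : IntegrableOn (fun t : ℝ => t * Real.exp (-(y * t)) *
      (((1 : ℂ) - (r : ℂ) * Complex.exp (-(t : ℂ) * Complex.I))⁻¹).re) (Ioi 0) := by
    refine (hintA.const_mul (1 - r)⁻¹).mono' hGcont.aestronglyMeasurable ?_
    filter_upwards [ae_restrict_mem measurableSet_Ioi] with t ht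
    have ht' : (0:ℝ) < t := ht
    have hwn := aux_norm_w hr0.le t
    have hlow : 1 - r ≤ ‖(1:ℂ) - (r:ℂ) * Complex.exp (-(t:ℂ) * Complex.I)‖ := by
      have h3 := norm_sub_norm_le (1:ℂ) ((r:ℂ) * Complex.exp (-(t:ℂ) * Complex.I))
      rwa [norm_one, hwn] at h3
    have h4 : (0:ℝ) ≤ t * Real.exp (-(y * t)) := mul_nonneg ht'.le (Real.exp_nonneg _)
    calc ‖t * Real.exp (-(y * t)) *
          (((1:ℂ) - (r:ℂ) * Complex.exp (-(t:ℂ) * Complex.I))⁻¹).re‖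
        = (t * Real.exp (-(y * t))) *
          |(((1:ℂ) - (r:ℂ) * Complex.exp (-(t:ℂ) * Complex.I))⁻¹).re| := by
          rw [Real.norm_eq_abs, abs_mul, abs_of_nonneg h4]
      _ ≤ (t * Real.exp (-(y * t))) * (1 - r)⁻¹ := by
          refine mul_le_mul_of_nonneg_left ?_ h4
          refine (Complex.abs_re_le_norm _).trans ?_
          rw [norm_inv]
          exact inv_anti₀ (by linarith) hlow
      _ = (1 - r)⁻¹ * (t * Real.exp (-(y * t))) := mul_comm _ _
  refine setIntegral_mono_on ((aux_integrable_mul_exp hy).div_const 2) hGint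
    measurableSet_Ioi fun t ht => ?_
  have ht' : (0:ℝ) < t := ht
  have h4 : (0:ℝ) ≤ t * Real.exp (-(y * t)) := mul_nonneg ht'.le (Real.exp_nonneg _)
  have hhalf := aux_geom_half hr0.le hr1 t
  calc t * Real.exp (-(y * t)) / 2 = (t * Real.exp (-(y * t))) * (1/2) := by ring
    _ ≤ _ := mul_le_mul_of_nonneg_left hhalf h4

/-- Positivity of the main series. -/
lemma aux_S_pos {y : ℝ} (hy : 0 < y) :
    0 < ∑' n : ℕ, (y ^ 2 - (n:ℝ) ^ 2) / (y ^ 2 + (n:ℝ) ^ 2) ^ 2 := by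
  set f : ℕ → ℝ := fun n => (y ^ 2 - (n:ℝ) ^ 2) / (y ^ 2 + (n:ℝ) ^ 2) ^ 2 with hf
  have hfabs : ∀ n : ℕ, |f n| ≤ (y ^ 2 + (n:ℝ) ^ 2)⁻¹ := by
    intro n
    rw [hf]
    simp only []
    rw [abs_div, abs_of_pos (by positivity : (0:ℝ) < (y ^ 2 + (n:ℝ) ^ 2) ^ 2)]
    rw [div_le_iff₀ (by positivity)]
    rw [sq (y ^ 2 + (n:ℝ) ^ 2), ← mul_assoc, inv_mul_cancel₀ (by positivity), one_mul]
    refine (abs_sub _ _).trans ?_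
    rw [abs_of_nonneg (by positivity : (0:ℝ) ≤ y ^ 2),
      abs_of_nonneg (by positivity : (0:ℝ) ≤ (n:ℝ) ^ 2)]
  have hr0 : ∀ k : ℕ, 0 < 1 - ((k:ℝ) + 2)⁻¹ := by
    intro k
    have h1 : ((k:ℝ) + 2)⁻¹ ≤ 2⁻¹ := by
      refine inv_anti₀ (by norm_num) ?_
      have : (0:ℝ) ≤ (k:ℝ) := Nat.cast_nonneg k
      linarith
    linarith
  have hr1 : ∀ k : ℕ, 1 - ((k:ℝ) + 2)⁻¹ < 1 := by
    intro k
    have h1 : (0:ℝ) < ((k:ℝ) + 2)⁻¹ := by positivity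
    linarith
  have htr : Tendsto (fun k : ℕ => 1 - ((k:ℝ) + 2)⁻¹) atTop (𝓝 1) := by
    have h1 : Tendsto (fun k : ℕ => ((k:ℝ) + 2)) atTop atTop :=
      tendsto_atTop_add_const_right atTop 2 tendsto_natCast_atTop_atTop
    have h2 := h1.inv_tendsto_atTop
    have h3 : Tendsto (fun k : ℕ => 1 - ((k:ℝ) + 2)⁻¹) atTop (𝓝 (1 - 0)) :=
      tendsto_const_nhds.sub h2
    simpa using h3
  have htt : Tendsto (fun k : ℕ => ∑' n : ℕ, f n * (1 - ((k:ℝ) + 2)⁻¹) ^ n) atTop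
      (𝓝 (∑' n, f n)) := by
    refine tendsto_tsum_of_dominated_convergence (aux_summable_bound y) (fun n => ?_) ?_
    · have h1 := (htr.pow n).const_mul (f n)
      simpa using h1
    · filter_upwards with k n
      rw [Real.norm_eq_abs, abs_mul]
      calc |f n| * |(1 - ((k:ℝ) + 2)⁻¹) ^ n| ≤ |f n| * 1 := by
            refine mul_le_mul_of_nonneg_left ?_ (abs_nonneg _)
            rw [abs_pow, abs_of_nonneg (hr0 k).le]
            exact pow_le_one₀ (hr0 k).le (hr1 k).le
        _ ≤ (y ^ 2 + (n:ℝ) ^ 2)⁻¹ := by rw [mul_one]; exact hfabs n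
  have hc := aux_int_pos hy
  have hle : (∫ t : ℝ in Ioi 0, t * Real.exp (-(y * t)) / 2) ≤ ∑' n, f n :=
    ge_of_tendsto htt (Eventually.of_forall fun k => aux_abel_lower hy (hr0 k) (hr1 k))
  linarith

lemma aux_im_term (a b : ℝ) :
    (Complex.I / ((a : ℂ) + (b : ℂ) * Complex.I) ^ 2).im
      = (a ^ 2 - b ^ 2) / (a ^ 2 + b ^ 2) ^ 2 := by
  set w : ℂ := (a : ℂ) + (b : ℂ) * Complex.I with hw
  have h1 : (Complex.I / w ^ 2).im = ((w ^ 2)⁻¹).re := by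
    rw [div_eq_mul_inv, Complex.mul_im]
    simp
  rw [h1, Complex.inv_re]
  have hwre : w.re = a := by simp [hw]
  have hwim : w.im = b := by simp [hw]
  have h2 : (w ^ 2).re = a ^ 2 - b ^ 2 := by
    rw [sq, Complex.mul_re, hwre, hwim]
    ring
  have h3 : Complex.normSq (w ^ 2) = (a ^ 2 + b ^ 2) ^ 2 := by
    rw [map_pow, hw, Complex.normSq_add_mul_I]
  rw [h2, h3]

/-- For every real `x ≠ 0`, the imaginary part of the series extension of the logistic
Cauchy transform on the line `Im z = −1/2` equals `∑_{n=0}^∞ (x² − n²)/(x² + n²)²`,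
which is strictly positive. -/
theorem logistic_extension_im_pos (x : ℝ) (hx : x ≠ 0) :
    (∑' n : ℕ, Complex.I /
        (((x : ℂ) - Complex.I / 2) + ((n : ℂ) + 1 / 2) * Complex.I) ^ 2).im
      = (∑' n : ℕ, (x ^ 2 - (n : ℝ) ^ 2) / (x ^ 2 + (n : ℝ) ^ 2) ^ 2) ∧
    0 < ∑' n : ℕ, (x ^ 2 - (n : ℝ) ^ 2) / (x ^ 2 + (n : ℝ) ^ 2) ^ 2 := by
  have hpos : 0 < ∑' n : ℕ, (x ^ 2 - (n : ℝ) ^ 2) / (x ^ 2 + (n : ℝ) ^ 2) ^ 2 := by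
    have h := aux_S_pos (abs_pos.mpr hx)
    simpa only [sq_abs] using h
  refine ⟨?_, hpos⟩
  have hterm : ∀ n : ℕ, Complex.I /
      (((x : ℂ) - Complex.I / 2) + ((n : ℂ) + 1 / 2) * Complex.I) ^ 2
      = Complex.I / ((x : ℂ) + (((n:ℝ)) : ℂ) * Complex.I) ^ 2 := by
    intro n
    have hbase : ((x : ℂ) - Complex.I / 2) + ((n : ℂ) + 1 / 2) * Complex.I
        = (x : ℂ) + (((n:ℝ)) : ℂ) * Complex.I := by
      push_cast
      ring
    rw [hbase]
  have hsummable : Summable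
      (fun n : ℕ => Complex.I / ((x : ℂ) + (((n:ℝ)) : ℂ) * Complex.I) ^ 2) := by
    refine Summable.of_norm ?_
    have hcomp : ∀ n : ℕ, ‖Complex.I / ((x : ℂ) + (((n:ℝ)) : ℂ) * Complex.I) ^ 2‖
        = (x ^ 2 + (n:ℝ) ^ 2)⁻¹ := by
      intro n
      rw [norm_div, norm_pow, Complex.norm_I, one_div]
      congr 1
      rw [← Complex.normSq_add_mul_I x (n:ℝ), ← Complex.sq_norm]
    refine (aux_summable_bound x).congr fun n => (hcomp n).symm
  rw [tsum_congr hterm]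
  have him := Complex.imCLM.map_tsum hsummable
  simp only [Complex.imCLM_apply] at him
  rw [him]
  exact tsum_congr fun n => aux_im_term x n
end

section
/- For every z ∈ ℂ with Re z > 0 and Im z ≥ −1/2, the real part of the series extension of the logistic Cauchy transform is strictly positive: Re Σ_{n=1}^∞ i/(z + (n − 1/2)i)² > 0. -/
/-- For every `z ∈ ℂ` with `Re z > 0` and `Im z ≥ −1/2`, the real part of the series
extension of the logistic Cauchy transform is strictly positive. -/
theorem logistic_extension_re_pos (z : ℂ) (hre : 0 < z.re) (him : -(1 / 2 : ℝ) ≤ z.im) :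
    0 < (∑' n : ℕ, Complex.I / (z + ((n : ℂ) + 1 / 2) * Complex.I) ^ 2).re := by
  set w : ℕ → ℂ := fun n => z + ((n : ℂ) + 1 / 2) * Complex.I with hw_def
  set f : ℕ → ℂ := fun n => Complex.I / (w n) ^ 2 with hf_def
  have hw_re : ∀ n : ℕ, (w n).re = z.re := by
    intro n; simp [hw_def]
  have hw_im : ∀ n : ℕ, (w n).im = z.im + ((n : ℝ) + 1 / 2) := by
    intro n; simp [hw_def]
  have hb : ∀ n : ℕ, (n : ℝ) ≤ (w n).im := by
    intro n; rw [hw_im]; linarith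
  have hw_ne : ∀ n : ℕ, w n ≠ 0 := by
    intro n h
    have := hw_re n
    rw [h] at this
    simp at this
    linarith
  -- summability
  have hsum : Summable f := by
    rw [← summable_nat_add_iff 1]
    apply Summable.of_norm
    have hcomp : Summable (fun n : ℕ => 1 / ((n : ℝ) + 1) ^ 2) := by
      have := (summable_nat_add_iff 1).mpr <|
        Real.summable_one_div_nat_pow.mpr (by norm_num : 1 < 2)
      simpa using this
    apply Summable.of_nonneg_of_le (fun n => norm_nonneg _) _ hcomp
    intro n
    have h1 : ((n : ℝ) + 1) ≤ (w (n + 1)).im := by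
      have := hb (n + 1); push_cast at this ⊢; linarith
    have h2 : ((n : ℝ) + 1) ≤ ‖w (n + 1)‖ := by
      refine h1.trans ?_
      calc (w (n+1)).im ≤ |(w (n+1)).im| := le_abs_self _
        _ ≤ ‖w (n+1)‖ := Complex.abs_im_le_norm _
    have hn1 : (0 : ℝ) < (n : ℝ) + 1 := by positivity
    have h3 : ((n : ℝ) + 1) ^ 2 ≤ ‖w (n + 1)‖ ^ 2 := by
      apply pow_le_pow_left₀ hn1.le h2
    rw [hf_def]
    simp only [norm_div, Complex.norm_I, norm_pow]
    apply div_le_div_of_nonneg_left (by norm_num) (by positivity) h3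
  rw [Complex.re_tsum hsum]
  have hre_eq : ∀ n : ℕ, (f n).re = ((w n) ^ 2).im / Complex.normSq ((w n) ^ 2) := by
    intro n
    rw [hf_def]
    simp [Complex.div_re, Complex.I_re, Complex.I_im]
  have him_sq : ∀ n : ℕ, ((w n) ^ 2).im = 2 * (w n).re * (w n).im := by
    intro n; rw [sq]; simp [Complex.mul_im]; ring
  have hnonneg : ∀ n : ℕ, 0 ≤ (f n).re := by
    intro n
    rw [hre_eq n, him_sq n, hw_re n]
    have h1 : 0 ≤ (w n).im := le_trans (by positivity) (hb n)
    have h2 : 0 ≤ Complex.normSq ((w n) ^ 2) := Complex.normSq_nonneg _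
    positivity
  have hpos : 0 < (f 1).re := by
    rw [hre_eq 1, him_sq 1, hw_re 1]
    have h1 : (0:ℝ) < (w 1).im := lt_of_lt_of_le one_pos (by simpa using hb 1)
    have h2 : 0 < Complex.normSq ((w 1) ^ 2) := by
      rw [Complex.normSq_pos]
      exact pow_ne_zero _ (hw_ne 1)
    positivity
  have hsre : Summable fun n => (f n).re := by
    simpa using Complex.reCLM.summable hsum
  exact Summable.tsum_pos hsre hnonneg 1 hpos
end

section
/- For every z ∈ ℂ with Im z ≥ −1/2 and z ≠ −i/2, the series extension of the logistic Cauchy transform does not vanish: Σ_{n=1}^∞ i/(z + (n − 1/2)i)² ≠ 0. -/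
/-- For every `z ∈ ℂ` with `Im z ≥ −1/2` and `z ≠ −i/2`, the series extension of the
logistic Cauchy transform does not vanish. -/
theorem logistic_extension_ne_zero (z : ℂ) (him : -(1 / 2 : ℝ) ≤ z.im)
    (hz : z ≠ -Complex.I / 2) :
    (∑' n : ℕ, Complex.I / (z + ((n : ℂ) + 1 / 2) * Complex.I) ^ 2) ≠ 0 := by
  set f : ℕ → ℂ := fun n => Complex.I / (z + ((n : ℂ) + 1 / 2) * Complex.I) ^ 2 with hf
  set u : ℕ → ℂ := fun n => z + ((n : ℂ) + 1 / 2) * Complex.I with hu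
  have hure : ∀ n, (u n).re = z.re := by intro n; simp [hu]
  have huim : ∀ n, (u n).im = z.im + (n + 1 / 2) := by intro n; simp [hu]
  -- summability
  have hsum : Summable f := by
    rw [← summable_nat_add_iff 1]
    have hg : Summable (fun n : ℕ => 1 / ((n : ℝ) + 1) ^ 2) := by
      have := (Real.summable_one_div_nat_pow (p := 2)).mpr one_lt_two
      have := (summable_nat_add_iff (f := fun n : ℕ => 1 / (n : ℝ) ^ 2) 1).mpr this
      simpa using this
    refine Summable.of_norm_bounded hg ?_
    intro n
    have hle : (n : ℝ) + 1 ≤ ‖u (n + 1)‖ := by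
      calc (n : ℝ) + 1 ≤ (u (n+1)).im := by
            rw [huim]; push_cast; linarith
        _ ≤ |(u (n+1)).im| := le_abs_self _
        _ ≤ ‖u (n+1)‖ := Complex.abs_im_le_norm _
    have hpos : (0:ℝ) < (n : ℝ) + 1 := by positivity
    simp only [hf, norm_div, Complex.norm_I, norm_pow]
    have h2 : (0:ℝ) < ‖u (n+1)‖ := lt_of_lt_of_le hpos hle
    rw [div_le_div_iff₀ (by positivity) (by positivity)]
    nlinarith [norm_nonneg (u (n+1))]
  have hsre : Summable fun n => (f n).re := (Complex.hasSum_re hsum.hasSum).summable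
  have hsim : Summable fun n => (f n).im := (Complex.hasSum_im hsum.hasSum).summable
  have hnsq : ∀ n, Complex.normSq ((u n)^2) = (Complex.normSq (u n))^2 := by
    intro n; rw [pow_two, pow_two, Complex.normSq_mul]
  have hfre : ∀ n, (f n).re
      = z.re * (2 * (z.im + (n + 1/2)) / Complex.normSq ((u n)^2)) := by
    intro n
    rw [show f n = Complex.I / (u n)^2 from rfl, Complex.div_re]
    simp only [Complex.I_re, Complex.I_im, pow_two, Complex.mul_im, hure, huim]
    ring
  have hfim : ∀ n, (f n).im
      = (z.re^2 - (z.im + (n + 1/2))^2) / Complex.normSq ((u n)^2) := by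
    intro n
    rw [show f n = Complex.I / (u n)^2 from rfl, Complex.div_im]
    simp only [Complex.I_re, Complex.I_im, pow_two, Complex.mul_re, hure, huim]
    ring
  intro h0
  rcases eq_or_ne z.re 0 with hx | hx
  · -- purely imaginary case: imaginary part of the sum is negative
    have hyne : z.im ≠ -(1/2 : ℝ) := by
      intro h
      apply hz
      apply Complex.ext <;> simp [hx, h] <;> norm_num
    have hy : -(1/2 : ℝ) < z.im := lt_of_le_of_ne (by linarith) (Ne.symm hyne)
    have hterm : ∀ n : ℕ, 0 < -(f n).im := by
      intro n
      have hc : (0:ℝ) < z.im + (n + 1/2) := by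
        have : (0:ℝ) ≤ n := Nat.cast_nonneg n
        linarith
      have hune : u n ≠ 0 := by
        intro h
        have := huim n
        rw [h] at this
        simp at this
        linarith
      have hnpos : 0 < Complex.normSq ((u n)^2) := by
        rw [hnsq]
        have := Complex.normSq_pos.mpr hune
        positivity
      rw [hfim, hx]
      rw [neg_pos]
      apply div_neg_of_neg_of_pos _ hnpos
      nlinarith
    have him0 : (∑' n, f n).im = 0 := by rw [h0]; simp
    rw [Complex.im_tsum hsum] at him0
    have hpos : 0 < ∑' n, -(f n).im :=
      Summable.tsum_pos hsim.neg (fun n => (hterm n).le) 0 (hterm 0)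
    rw [tsum_neg, him0] at hpos
    simp at hpos
  · -- nonzero real part case: real part of the sum is z.re * (positive)
    set g : ℕ → ℝ := fun n => 2 * (z.im + (n + 1/2)) / Complex.normSq ((u n)^2) with hgdef
    have hgsum : Summable g := by
      have : g = fun n => (f n).re * (z.re)⁻¹ := by
        funext n
        rw [hfre n, mul_comm z.re, mul_assoc, mul_inv_cancel₀ hx, mul_one]
      rw [this]
      exact hsre.mul_right _
    have hg0 : ∀ n, 0 ≤ g n := by
      intro n
      apply div_nonneg _ (Complex.normSq_nonneg _)
      have : (0:ℝ) ≤ n := Nat.cast_nonneg n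
      linarith
    have hg1 : 0 < g 1 := by
      have hune : u 1 ≠ 0 := by
        intro h
        have := huim 1
        rw [h] at this
        simp at this
        linarith
      have hnpos : 0 < Complex.normSq ((u 1)^2) := by
        rw [hnsq]
        have := Complex.normSq_pos.mpr hune
        positivity
      apply div_pos _ hnpos
      push_cast
      linarith
    have hpos : 0 < ∑' n, g n := Summable.tsum_pos hgsum hg0 1 hg1
    have hre0 : (∑' n, f n).re = 0 := by rw [h0]; simp
    rw [Complex.re_tsum hsum] at hre0
    have : ∑' n, (f n).re = z.re * ∑' n, g n := by
      simp_rw [hfre]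
      exact tsum_mul_left
    rw [this] at hre0
    rcases mul_eq_zero.mp hre0 with h | h
    · exact hx h
    · linarith
end

section
/- For every compact set I ⊂ (0, ∞) there exists a constant M > 0 such that for all t, y ∈ I and all real x with |x| ≥ 1, writing z = x + yi, one has |Γ(t + zi)·Γ(t − zi)| ≤ M·e^{−π|x|}·|x|^{2t−1}. -/
set_option linter.unnecessarySeqFocus false
set_option linter.unreachableTactic false
set_option linter.unusedTactic false

open Complex Real Set Filter

lemma cosh_ge_half_exp_abs (u : ℝ) : Real.exp |u| / 2 ≤ Real.cosh u := by
  rw [Real.cosh_eq]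
  rcases abs_cases u with ⟨h, _⟩ | ⟨h, _⟩ <;> rw [h] <;> nlinarith [Real.exp_pos u, Real.exp_pos (-u)]

lemma cosh_le_exp_abs (u : ℝ) : Real.cosh u ≤ Real.exp |u| := by
  rw [Real.cosh_eq]
  rcases abs_cases u with ⟨h, h'⟩ | ⟨h, h'⟩ <;> rw [h]
  · nlinarith [Real.exp_le_exp.2 (by linarith : -u ≤ u)]
  · nlinarith [Real.exp_le_exp.2 (by linarith : u ≤ -u)]

lemma abs_sinh_le_cosh (u : ℝ) : |Real.sinh u| ≤ Real.cosh u := by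
  rw [Real.sinh_eq, Real.cosh_eq, abs_div]
  have := Real.exp_pos u; have := Real.exp_pos (-u)
  have h2 : |(2:ℝ)| = 2 := by norm_num
  rw [h2, div_le_div_iff_of_pos_right (by norm_num)]
  rcases abs_cases (Real.exp u - Real.exp (-u)) with ⟨h, _⟩ | ⟨h, _⟩ <;> rw [h] <;> linarith

lemma cosh_ratio_bound (A B : ℝ) : Real.cosh A ≤ 2 * Real.cosh (A + B) * Real.cosh B := by
  have h : Real.cosh A = Real.cosh (A + B) * Real.cosh B - Real.sinh (A + B) * Real.sinh B := by
    rw [← Real.cosh_sub]; ring_nf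
  have h2 : |Real.sinh (A + B) * Real.sinh B| ≤ Real.cosh (A + B) * Real.cosh B := by
    rw [abs_mul]
    exact mul_le_mul (abs_sinh_le_cosh _) (abs_sinh_le_cosh _) (abs_nonneg _) (Real.cosh_pos _).le
  have := abs_le.1 h2
  linarith

-- L1 : exact modulus of Gamma on the line re = 1/2
lemma abs_Gamma_half (u : ℝ) :
    norm (Complex.Gamma (1 / 2 + u * I)) = Real.sqrt (π / Real.cosh (π * u)) := by
  have key : (norm (Complex.Gamma (1 / 2 + u * I)) : ℝ) ^ 2 = π / Real.cosh (π * u) := by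
    have h1 : (1 : ℂ) - (1 / 2 + u * I) = starRingEnd ℂ (1 / 2 + u * I) := by
      simp [Complex.ext_iff]; norm_num
    have h2 := Complex.Gamma_mul_Gamma_one_sub (1 / 2 + u * I)
    rw [h1, Complex.Gamma_conj, Complex.mul_conj] at h2
    have h3 : Complex.sin (π * (1 / 2 + u * I)) = (Real.cosh (π * u) : ℂ) := by
      have e1 : (π : ℂ) * (1 / 2 + u * I) = π / 2 + (↑(π * u)) * I := by push_cast; ring
      rw [e1, Complex.sin_add, Complex.sin_pi_div_two, Complex.cos_pi_div_two,
        Complex.cos_mul_I, Complex.ofReal_cosh]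
      ring
    rw [h3] at h2
    have h4 : Complex.normSq (Complex.Gamma (1 / 2 + u * I)) = π / Real.cosh (π * u) := by
      have := h2
      rw [← Complex.ofReal_div] at this
      exact_mod_cast this
    rw [Complex.sq_norm, h4]
  rw [← key, Real.sqrt_sq (norm_nonneg _)]

lemma abs_Gamma_le_Gamma_re {s : ℂ} (hs : 0 < s.re) :
    norm (Complex.Gamma s) ≤ Real.Gamma s.re := by
  rw [Complex.Gamma_eq_integral hs, Real.Gamma_eq_integral hs]
  rw [Complex.GammaIntegral]
  have : (∫ x in Ioi (0:ℝ), Real.exp (-x) * x ^ (s.re - 1)) =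
      ∫ x in Ioi (0:ℝ), ‖(↑(Real.exp (-x)) * (x:ℂ) ^ (s - 1))‖ := by
    refine MeasureTheory.setIntegral_congr_fun measurableSet_Ioi (fun x hx => ?_)
    rw [norm_mul, Complex.norm_real, Real.norm_eq_abs,
      Complex.norm_cpow_eq_rpow_re_of_pos hx]
    simp [abs_of_pos (Real.exp_pos (-x)), Complex.sub_re]
  rw [this]
  have hb : ‖∫ x in Ioi (0:ℝ), (↑(Real.exp (-x)) * (x:ℂ) ^ (s-1))‖ ≤
      ∫ x in Ioi (0:ℝ), ‖(↑(Real.exp (-x)) * (x:ℂ) ^ (s-1))‖ :=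
    MeasureTheory.norm_integral_le_integral_norm _
  exact hb

lemma Real_Gamma_le_sqrt_pi {a : ℝ} (h1 : 1/2 ≤ a) (h2 : a ≤ 3/2) :
    Real.Gamma a ≤ Real.sqrt π := by
  have hconv := Real.convexOn_Gamma
  have hmem : a ∈ segment ℝ (1/2 : ℝ) (3/2 : ℝ) := by
    rw [segment_eq_Icc (by norm_num)]; exact ⟨h1, h2⟩
  have := hconv.le_on_segment (by norm_num : (1/2:ℝ) ∈ Ioi 0)
    (by norm_num : (3/2:ℝ) ∈ Ioi 0) hmem
  have h32 : Real.Gamma (3/2) = (1/2) * Real.Gamma (1/2) := by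
    have := Real.Gamma_add_one (by norm_num : (1/2:ℝ) ≠ 0)
    norm_num at this ⊢; linarith
  rw [Real.Gamma_one_half_eq] at this h32
  rcases max_cases (Real.sqrt π) ((1/2) * Real.sqrt π) with ⟨he, _⟩ | ⟨he, _⟩ <;>
    rw [h32, he] at this
  · exact this
  · nlinarith [Real.sqrt_nonneg π]

-- decomposition of the cosine factor
lemma cf_eq (w : ℂ) : (↑(π/2) * w - ↑(π/4) : ℂ) =
    ↑(π/2 * w.re - π/4) + ↑(π/2 * w.im) * I := by
  apply Complex.ext <;> simp

lemma cf_re (w : ℂ) : (Complex.cos (↑(π/2) * w - ↑(π/4))).re =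
    Real.cos (π/2 * w.re - π/4) * Real.cosh (π/2 * w.im) := by
  rw [cf_eq, Complex.cos_add_mul_I, ← Complex.ofReal_cos, ← Complex.ofReal_cosh,
    ← Complex.ofReal_sin, ← Complex.ofReal_sinh, ← Complex.ofReal_mul, ← Complex.ofReal_mul]
  simp only [Complex.sub_re, Complex.ofReal_re, Complex.mul_re, Complex.ofReal_im,
    Complex.I_re, Complex.I_im]
  ring

lemma cf_pos {w : ℂ} (h1 : -(1/4 : ℝ) < w.re) (h2 : w.re < 5/4) :
    0 < (Complex.cos (↑(π/2) * w - ↑(π/4))).re := by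
  rw [cf_re]
  have hp := Real.pi_pos
  refine mul_pos (Real.cos_pos_of_mem_Ioo ⟨by nlinarith, by nlinarith⟩) (Real.cosh_pos _)

lemma cf_lb {w : ℂ} (h1 : (0:ℝ) ≤ w.re) (h2 : w.re ≤ 1) :
    Real.sqrt 2 / 2 * Real.cosh (π/2 * w.im) ≤
      norm (Complex.cos (↑(π/2) * w - ↑(π/4))) := by
  have hθ : |π/2 * w.re - π/4| ≤ π/4 := by
    have hp := Real.pi_pos
    rw [abs_le]; constructor <;> nlinarith
  have hc : Real.sqrt 2 / 2 ≤ Real.cos (π/2 * w.re - π/4) := by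
    have h5 := Real.cos_le_cos_of_nonneg_of_le_pi (abs_nonneg (π/2 * w.re - π/4))
      (by linarith [Real.pi_pos] : π/4 ≤ π) hθ
    rw [Real.cos_abs] at h5
    rw [← Real.cos_pi_div_four]
    exact h5
  calc Real.sqrt 2 / 2 * Real.cosh (π/2 * w.im)
      ≤ Real.cos (π/2 * w.re - π/4) * Real.cosh (π/2 * w.im) :=
        mul_le_mul_of_nonneg_right hc (Real.cosh_pos _).le
    _ = (Complex.cos (↑(π/2) * w - ↑(π/4))).re := (cf_re w).symm
    _ ≤ |(Complex.cos (↑(π/2) * w - ↑(π/4))).re| := le_abs_self _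
    _ ≤ _ := Complex.abs_re_le_norm _

lemma one_le_cosh' (u : ℝ) : 1 ≤ Real.cosh u := by
  nlinarith [Real.cosh_sq u, Real.cosh_pos u, sq_nonneg (Real.sinh u)]

lemma cosh_half_ge (v : ℝ) : (1 + |v|) / 2 ≤ Real.cosh (π/2 * v) := by
  have h1 := cosh_ge_half_exp_abs (π/2 * v)
  have h2 : |π/2 * v| + 1 ≤ Real.exp |π/2 * v| := Real.add_one_le_exp _
  have h3 : |v| ≤ |π/2 * v| := by
    rw [abs_mul]
    nlinarith [Real.pi_gt_three, abs_nonneg v, abs_of_pos (by positivity : (0:ℝ) < π/2)]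
  linarith

-- √(π/cosh(π(x+v))) ≤ 2 cosh(πv/2) √(π/cosh(πx))
lemma sqrt_ratio_bound (x v : ℝ) :
    Real.sqrt (π / Real.cosh (π * (x + v))) ≤
      2 * Real.cosh (π/2 * v) * Real.sqrt (π / Real.cosh (π * x)) := by
  have hq := one_le_cosh' (π/2 * v)
  have hA := Real.cosh_pos (π * x)
  have hA' := Real.cosh_pos (π * (x + v))
  have hB : Real.cosh (π * v) ≤ 2 * Real.cosh (π/2 * v) ^ 2 := by
    have : π * v = 2 * (π/2 * v) := by ring
    rw [this, Real.cosh_two_mul]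
    nlinarith [Real.cosh_sq (π/2*v), sq_nonneg (Real.sinh (π/2*v))]
  have h1 : Real.cosh (π * x) ≤ 2 * Real.cosh (π * (x + v)) * Real.cosh (π * v) := by
    have := cosh_ratio_bound (π * x) (π * v)
    have e : π * x + π * v = π * (x + v) := by ring
    rwa [e] at this
  have h2 : π / Real.cosh (π * (x + v)) ≤
      (2 * Real.cosh (π/2 * v)) ^ 2 * (π / Real.cosh (π * x)) := by
    rw [div_le_iff₀ hA']
    have hπ := Real.pi_pos
    have expand : (2 * Real.cosh (π/2 * v)) ^ 2 * (π / Real.cosh (π * x)) * Real.cosh (π * (x+v))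
        = π * ((4 * Real.cosh (π/2*v)^2 * Real.cosh (π*(x+v))) / Real.cosh (π*x)) := by
      ring
    rw [expand]
    have hD : Real.cosh (π*x) ≤ 4 * Real.cosh (π/2*v)^2 * Real.cosh (π*(x+v)) := by
      nlinarith [Real.cosh_pos (π*v)]
    have hone : (1:ℝ) ≤ 4 * Real.cosh (π/2*v)^2 * Real.cosh (π*(x+v)) / Real.cosh (π*x) :=
      (one_le_div hA).2 hD
    nlinarith
  calc Real.sqrt (π / Real.cosh (π * (x + v)))
      ≤ Real.sqrt ((2 * Real.cosh (π/2 * v)) ^ 2 * (π / Real.cosh (π * x))) :=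
        Real.sqrt_le_sqrt h2
    _ = 2 * Real.cosh (π/2 * v) * Real.sqrt (π / Real.cosh (π * x)) := by
        rw [Real.sqrt_mul (by positivity), Real.sqrt_sq (by positivity)]

lemma inv_cf_cube (v : ℝ) :
    ((Real.sqrt 2 / 2 * Real.cosh (π/2 * v))⁻¹) ^ 3 ≤ (2 / Real.cosh (π/2 * v)) ^ 3 := by
  have hq := one_le_cosh' (π/2 * v)
  have hq0 : (0:ℝ) < Real.cosh (π/2 * v) := by linarith
  have hr : (1:ℝ) ≤ Real.sqrt 2 := by
    rw [show (1:ℝ) = Real.sqrt 1 by simp]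
    exact Real.sqrt_le_sqrt (by norm_num)
  have h1 : Real.cosh (π/2 * v) / 2 ≤ Real.sqrt 2 / 2 * Real.cosh (π/2 * v) := by nlinarith
  have h2 : (Real.sqrt 2 / 2 * Real.cosh (π/2 * v))⁻¹ ≤ 2 / Real.cosh (π/2 * v) := by
    rw [show (2:ℝ) / Real.cosh (π/2*v) = (Real.cosh (π/2*v) / 2)⁻¹ by
      rw [inv_div]]
    exact inv_anti₀ (by positivity) h1
  exact pow_le_pow_left₀ (by positivity) h2 3

lemma boundary0_ineq (x v : ℝ) :
    Real.sqrt (π / Real.cosh (π * (x + v))) *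
      ((Real.sqrt 2 / 2 * Real.cosh (π/2 * v))⁻¹) ^ 3
      ≤ 200 * Real.sqrt (π / Real.cosh (π * x)) := by
  have hq := one_le_cosh' (π/2 * v)
  have hq0 : (0:ℝ) < Real.cosh (π/2 * v) := by linarith
  have hs : (0:ℝ) ≤ Real.sqrt (π / Real.cosh (π * x)) := Real.sqrt_nonneg _
  calc Real.sqrt (π / Real.cosh (π * (x + v))) *
      ((Real.sqrt 2 / 2 * Real.cosh (π/2 * v))⁻¹) ^ 3
      ≤ (2 * Real.cosh (π/2 * v) * Real.sqrt (π / Real.cosh (π * x))) *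
        ((2 / Real.cosh (π/2 * v)) ^ 3) := by
        refine mul_le_mul (sqrt_ratio_bound x v) (inv_cf_cube v) (by positivity) (by positivity)
    _ = 16 * Real.sqrt (π / Real.cosh (π * x)) / (Real.cosh (π/2 * v)) ^ 2 := by
        field_simp; ring
    _ ≤ 200 * Real.sqrt (π / Real.cosh (π * x)) := by
        rw [div_le_iff₀ (by positivity)]
        have hq2 : 1 ≤ (Real.cosh (π/2*v))^2 := by nlinarith
        have h5 := mul_le_mul_of_nonneg_left hq2 hs
        have hsq2 : (0:ℝ) ≤ Real.sqrt (π / Real.cosh (π * x)) * (Real.cosh (π/2*v))^2 := by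
          positivity
        nlinarith

lemma boundary1_ineq (x v : ℝ) (hx : 1 ≤ x) :
    (1/2 + |x + v|) * x⁻¹ *
      (Real.sqrt (π / Real.cosh (π * (x + v))) *
        ((Real.sqrt 2 / 2 * Real.cosh (π/2 * v))⁻¹) ^ 3)
      ≤ 200 * Real.sqrt (π / Real.cosh (π * x)) := by
  have hq := one_le_cosh' (π/2 * v)
  have hq0 : (0:ℝ) < Real.cosh (π/2 * v) := by linarith
  have hx0 : (0:ℝ) < x := by linarith
  have hs : (0:ℝ) ≤ Real.sqrt (π / Real.cosh (π * x)) := Real.sqrt_nonneg _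
  have hfac : (1/2 + |x + v|) * x⁻¹ ≤ 2 + |v| := by
    have h1 : |x + v| ≤ x + |v| := by
      calc |x + v| ≤ |x| + |v| := abs_add_le _ _
        _ = x + |v| := by rw [abs_of_pos hx0]
    rw [← div_eq_mul_inv, div_le_iff₀ hx0]
    nlinarith [abs_nonneg v, mul_le_mul_of_nonneg_left hx (abs_nonneg v)]
  have hmid : Real.sqrt (π / Real.cosh (π * (x + v))) *
      ((Real.sqrt 2 / 2 * Real.cosh (π/2 * v))⁻¹) ^ 3 ≤
      16 * Real.sqrt (π / Real.cosh (π * x)) / (Real.cosh (π/2 * v)) ^ 2 := by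
    calc Real.sqrt (π / Real.cosh (π * (x + v))) *
        ((Real.sqrt 2 / 2 * Real.cosh (π/2 * v))⁻¹) ^ 3
        ≤ (2 * Real.cosh (π/2 * v) * Real.sqrt (π / Real.cosh (π * x))) *
          ((2 / Real.cosh (π/2 * v)) ^ 3) :=
          mul_le_mul (sqrt_ratio_bound x v) (inv_cf_cube v) (by positivity) (by positivity)
      _ = 16 * Real.sqrt (π / Real.cosh (π * x)) / (Real.cosh (π/2 * v)) ^ 2 := by
          field_simp; ring
  have hv2 : (1 + |v|) / 2 ≤ Real.cosh (π/2 * v) := cosh_half_ge v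
  have hva : (0:ℝ) ≤ |v| := abs_nonneg v
  calc (1/2 + |x + v|) * x⁻¹ *
      (Real.sqrt (π / Real.cosh (π * (x + v))) *
        ((Real.sqrt 2 / 2 * Real.cosh (π/2 * v))⁻¹) ^ 3)
      ≤ (2 + |v|) * (16 * Real.sqrt (π / Real.cosh (π * x)) / (Real.cosh (π/2 * v)) ^ 2) := by
        refine mul_le_mul hfac hmid (by positivity) (by linarith)
    _ ≤ 200 * Real.sqrt (π / Real.cosh (π * x)) := by
        rw [div_eq_mul_inv, ← mul_assoc]
        rw [show (2 + |v|) * (16 * Real.sqrt (π / Real.cosh (π * x))) *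
          ((Real.cosh (π/2 * v)) ^ 2)⁻¹ =
          ((2 + |v|) * 16 * ((Real.cosh (π/2 * v)) ^ 2)⁻¹) * Real.sqrt (π / Real.cosh (π * x)) by
            ring]
        refine mul_le_mul_of_nonneg_right ?_ hs
        rw [← div_eq_mul_inv, div_le_iff₀ (by positivity)]
        have h6 : ((1+|v|)/2)^2 ≤ (Real.cosh (π/2*v))^2 :=
          pow_le_pow_left₀ (by positivity) hv2 2
        nlinarith

set_option maxHeartbeats 2000000 in
lemma key_ratio {x : ℝ} (hx : 1 ≤ x) {α : ℝ} (hα0 : 0 ≤ α) (hα1 : α ≤ 1) :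
    norm (Complex.Gamma (1/2 + ↑α + ↑x * I)) ≤
      200 * x ^ α * Real.sqrt (π / Real.cosh (π * x)) := by
  have hx0 : (0:ℝ) < x := lt_of_lt_of_le one_pos hx
  set c : ℝ := Real.log x with hc
  have hc0 : 0 ≤ c := Real.log_nonneg hx
  set F : ℂ → ℂ := fun w => Complex.Gamma (1/2 + w + ↑x * I) *
    Complex.exp (-(w * ↑c)) * ((Complex.cos (↑(π/2) * w - ↑(π/4)))⁻¹) ^ 3 with hF
  -- modulus decomposition
  have absF : ∀ w : ℂ, norm (F w) =
      norm (Complex.Gamma (1/2 + w + ↑x * I)) * Real.exp (-(w.re * c)) *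
        ((norm (Complex.cos (↑(π/2) * w - ↑(π/4))))⁻¹) ^ 3 := by
    intro w
    rw [hF]
    simp only [norm_mul, norm_pow, norm_inv, Complex.norm_exp]
    congr 2
    simp [Complex.neg_re, Complex.mul_re]
  -- Gamma argument on the boundary lines
  have harg0 : ∀ z : ℂ, z.re = 0 → (1/2 + z + ↑x * I) = 1/2 + ↑(x + z.im) * I := by
    intro z hz
    apply Complex.ext <;> simp [hz] <;> ring
  have harg1 : ∀ z : ℂ, z.re = 1 → (1/2 + z + ↑x * I) = (1/2 + ↑(x + z.im) * I) + 1 := by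
    intro z hz
    apply Complex.ext <;> simp [hz] <;> ring
  -- boundary bound on re = 0
  have hle0 : ∀ z : ℂ, z.re = 0 → ‖F z‖ ≤ 200 * Real.sqrt (π / Real.cosh (π * x)) := by
    intro z hz
    rw [absF z, harg0 z hz, abs_Gamma_half (x + z.im)]
    have he : Real.exp (-(z.re * c)) = 1 := by rw [hz]; simp
    rw [he, mul_one]
    have hcf := cf_lb (w := z) (by rw [hz]) (by rw [hz]; norm_num)
    have h2 : ((norm (Complex.cos (↑(π/2) * z - ↑(π/4))))⁻¹) ^ 3 ≤
        ((Real.sqrt 2 / 2 * Real.cosh (π/2 * z.im))⁻¹) ^ 3 := by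
      refine pow_le_pow_left₀ (by positivity) (inv_anti₀ (by positivity) hcf) 3
    calc Real.sqrt (π / Real.cosh (π * (x + z.im))) *
        ((norm (Complex.cos (↑(π/2) * z - ↑(π/4))))⁻¹) ^ 3
        ≤ Real.sqrt (π / Real.cosh (π * (x + z.im))) *
          ((Real.sqrt 2 / 2 * Real.cosh (π/2 * z.im))⁻¹) ^ 3 :=
          mul_le_mul_of_nonneg_left h2 (Real.sqrt_nonneg _)
      _ ≤ 200 * Real.sqrt (π / Real.cosh (π * x)) := boundary0_ineq x z.im
  -- boundary bound on re = 1
  have hle1 : ∀ z : ℂ, z.re = 1 → ‖F z‖ ≤ 200 * Real.sqrt (π / Real.cosh (π * x)) := by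
    intro z hz
    rw [absF z, harg1 z hz]
    have hne : (1/2 + ↑(x + z.im) * I : ℂ) ≠ 0 := by
      intro h
      have := congrArg Complex.re h
      simp at this
    rw [Complex.Gamma_add_one _ hne, norm_mul, abs_Gamma_half (x + z.im)]
    have he : Real.exp (-(z.re * c)) = x⁻¹ := by
      rw [hz, one_mul, hc, Real.exp_neg, Real.exp_log hx0]
    rw [he]
    have habs : norm (1/2 + ↑(x + z.im) * I : ℂ) ≤ 1/2 + |x + z.im| := by
      calc norm (1/2 + ↑(x + z.im) * I : ℂ) ≤
          |(1/2 + ↑(x + z.im) * I : ℂ).re| + |(1/2 + ↑(x + z.im) * I : ℂ).im| :=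
            Complex.norm_le_abs_re_add_abs_im _
        _ = 1/2 + |x + z.im| := by norm_num
    have hcf := cf_lb (w := z) (by rw [hz]; norm_num) (by rw [hz])
    have h2 : ((norm (Complex.cos (↑(π/2) * z - ↑(π/4))))⁻¹) ^ 3 ≤
        ((Real.sqrt 2 / 2 * Real.cosh (π/2 * z.im))⁻¹) ^ 3 :=
      pow_le_pow_left₀ (by positivity) (inv_anti₀ (by positivity) hcf) 3
    calc norm (1/2 + ↑(x + z.im) * I : ℂ) *
          Real.sqrt (π / Real.cosh (π * (x + z.im))) * x⁻¹ *
        ((norm (Complex.cos (↑(π/2) * z - ↑(π/4))))⁻¹) ^ 3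
        ≤ (1/2 + |x + z.im|) * x⁻¹ *
          (Real.sqrt (π / Real.cosh (π * (x + z.im))) *
            ((Real.sqrt 2 / 2 * Real.cosh (π/2 * z.im))⁻¹) ^ 3) := by
          have e1 : norm (1/2 + ↑(x + z.im) * I : ℂ) *
              Real.sqrt (π / Real.cosh (π * (x + z.im))) * x⁻¹ *
              ((norm (Complex.cos (↑(π/2) * z - ↑(π/4))))⁻¹) ^ 3 =
              (norm (1/2 + ↑(x + z.im) * I : ℂ) * x⁻¹) *
              (Real.sqrt (π / Real.cosh (π * (x + z.im))) *
                ((norm (Complex.cos (↑(π/2) * z - ↑(π/4))))⁻¹) ^ 3) := by ring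
          have e2 : (1/2 + |x + z.im|) * x⁻¹ *
              (Real.sqrt (π / Real.cosh (π * (x + z.im))) *
                ((Real.sqrt 2 / 2 * Real.cosh (π/2 * z.im))⁻¹) ^ 3) =
              ((1/2 + |x + z.im|) * x⁻¹) *
              (Real.sqrt (π / Real.cosh (π * (x + z.im))) *
                ((Real.sqrt 2 / 2 * Real.cosh (π/2 * z.im))⁻¹) ^ 3) := by ring
          rw [e1, e2]
          refine mul_le_mul (mul_le_mul_of_nonneg_right habs (by positivity)) ?_
            (by positivity) (by positivity)
          exact mul_le_mul_of_nonneg_left h2 (Real.sqrt_nonneg _)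
      _ ≤ 200 * Real.sqrt (π / Real.cosh (π * x)) := boundary1_ineq x z.im hx
  -- differentiability
  have hcosne : ∀ w : ℂ, -(1/4:ℝ) < w.re → w.re < 5/4 →
      Complex.cos (↑(π/2) * w - ↑(π/4)) ≠ 0 := by
    intro w h1 h2 h
    have := cf_pos h1 h2
    rw [h] at this
    simp at this
  have hdiffU : DifferentiableOn ℂ F (Complex.re ⁻¹' Ioo (-(1/4:ℝ)) (5/4)) := by
    intro w hw
    simp only [Set.mem_preimage, Set.mem_Ioo] at hw
    have hG : DifferentiableAt ℂ (fun w : ℂ => Complex.Gamma (1/2 + w + ↑x * I)) w := by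
      have hinner : DifferentiableAt ℂ (fun w : ℂ => 1/2 + w + ↑x * I) w :=
        (differentiableAt_id.const_add (1/2 : ℂ)).add_const (↑x * I)
      refine DifferentiableAt.comp w (Complex.differentiableAt_Gamma _ ?_) hinner
      intro m h
      have := congrArg Complex.re h
      simp only [Complex.add_re, Complex.ofReal_re, Complex.mul_re, Complex.I_re,
        Complex.I_im, Complex.neg_re, Complex.natCast_re] at this
      norm_num at this
      linarith [hw.1, (by positivity : (0:ℝ) ≤ (m:ℝ))]
    have hE : DifferentiableAt ℂ (fun w : ℂ => Complex.exp (-(w * ↑c))) w :=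
      ((differentiableAt_id.mul_const (↑c : ℂ)).neg).cexp
    have hC : DifferentiableAt ℂ (fun w : ℂ =>
        ((Complex.cos (↑(π/2) * w - ↑(π/4)))⁻¹) ^ 3) w := by
      refine DifferentiableAt.pow ?_ 3
      refine DifferentiableAt.inv ?_ (hcosne w hw.1 hw.2)
      exact (Complex.differentiable_cos.differentiableAt).comp w
        ((differentiableAt_id.const_mul _).sub_const _)
    exact ((hG.mul hE).mul hC).differentiableWithinAt
  have hstrip : (Complex.re ⁻¹' Ioo (0:ℝ) 1) ⊆ Complex.re ⁻¹' Ioo (-(1/4:ℝ)) (5/4) := by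
    intro w hw
    simp only [Set.mem_preimage, Set.mem_Ioo] at *
    exact ⟨by linarith [hw.1], by linarith [hw.2]⟩
  have hclos : closure (Complex.re ⁻¹' Ioo (0:ℝ) 1) ⊆
      Complex.re ⁻¹' Ioo (-(1/4:ℝ)) (5/4) := by
    refine (Complex.continuous_re.closure_preimage_subset _).trans ?_
    intro w hw
    simp only [Set.mem_preimage] at *
    rw [closure_Ioo (by norm_num : (0:ℝ) ≠ 1)] at hw
    exact ⟨by linarith [hw.1], by linarith [hw.2]⟩
  have hd : DiffContOnCl ℂ F (Complex.re ⁻¹' Ioo (0:ℝ) 1) :=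
    ⟨hdiffU.mono hstrip, hdiffU.continuousOn.mono hclos⟩
  -- bound inside the strip
  have hFbd : ∀ z : ℂ, z ∈ Complex.re ⁻¹' Ioo (0:ℝ) 1 → ‖F z‖ ≤ 16 := by
    intro z hz
    simp only [Set.mem_preimage, Set.mem_Ioo] at hz
    rw [absF z]
    have hG : norm (Complex.Gamma (1/2 + z + ↑x * I)) ≤ 2 := by
      have hre : (1/2 + z + ↑x * I).re = 1/2 + z.re := by
        simp [Complex.add_re, Complex.mul_re]
      have h1 := abs_Gamma_le_Gamma_re (s := 1/2 + z + ↑x * I) (by rw [hre]; linarith [hz.1])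
      rw [hre] at h1
      have h2 := Real_Gamma_le_sqrt_pi (a := 1/2 + z.re) (by linarith [hz.1]) (by linarith [hz.2])
      have h3 : Real.sqrt π ≤ 2 := by
        rw [show (2:ℝ) = Real.sqrt 4 by rw [show (4:ℝ) = 2^2 by norm_num, Real.sqrt_sq]; norm_num]
        exact Real.sqrt_le_sqrt (by linarith [Real.pi_le_four])
      linarith
    have hE : Real.exp (-(z.re * c)) ≤ 1 := by
      rw [Real.exp_le_one_iff]
      have : 0 ≤ z.re * c := mul_nonneg (by linarith [hz.1]) hc0
      linarith
    have hC : ((norm (Complex.cos (↑(π/2) * z - ↑(π/4))))⁻¹) ^ 3 ≤ 8 := by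
      have hcf := cf_lb (w := z) (le_of_lt hz.1) (le_of_lt hz.2)
      have hq := one_le_cosh' (π/2 * z.im)
      have hr : (1:ℝ) ≤ Real.sqrt 2 := by
        rw [show (1:ℝ) = Real.sqrt 1 by simp]
        exact Real.sqrt_le_sqrt (by norm_num)
      have hlow : (1/2 : ℝ) ≤ norm (Complex.cos (↑(π/2) * z - ↑(π/4))) := by
        nlinarith
      have h4 : (norm (Complex.cos (↑(π/2) * z - ↑(π/4))))⁻¹ ≤ 2 := by
        calc (norm (Complex.cos (↑(π/2) * z - ↑(π/4))))⁻¹ ≤ ((1:ℝ)/2)⁻¹ :=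
              inv_anti₀ (by norm_num) hlow
          _ = 2 := by norm_num
      calc ((norm (Complex.cos (↑(π/2) * z - ↑(π/4))))⁻¹) ^ 3 ≤ 2 ^ 3 :=
            pow_le_pow_left₀ (by positivity) h4 3
        _ ≤ 8 := by norm_num
    calc norm (Complex.Gamma (1/2 + z + ↑x * I)) * Real.exp (-(z.re * c)) *
        ((norm (Complex.cos (↑(π/2) * z - ↑(π/4))))⁻¹) ^ 3
        ≤ 2 * 1 * 8 := by
          refine mul_le_mul (mul_le_mul hG hE (Real.exp_pos _).le (by norm_num)) hC
            (by positivity) (by norm_num)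
      _ = 16 := by norm_num
  -- growth condition
  have hB : ∃ cc < π / (1 - 0 : ℝ), ∃ B, F =O[Filter.comap (|Complex.im ·|) Filter.atTop ⊓
      Filter.principal (Complex.re ⁻¹' Ioo (0:ℝ) 1)]
      fun z => Real.exp (B * Real.exp (cc * |z.im|)) := by
    refine ⟨0, by rw [sub_zero, div_one]; exact Real.pi_pos, Real.log 16, ?_⟩
    refine Asymptotics.IsBigO.of_bound 1 ?_
    refine Filter.eventually_inf_principal.mpr (Filter.Eventually.of_forall ?_)
    intro z hz
    have h1 := hFbd z hz
    have h2 : Real.exp (Real.log 16 * Real.exp ((0:ℝ) * |z.im|)) = 16 := by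
      rw [zero_mul, Real.exp_zero, mul_one, Real.exp_log (by norm_num)]
    rw [Real.norm_eq_abs, h2]
    calc ‖F z‖ ≤ 16 := h1
      _ ≤ 1 * |(16:ℝ)| := by norm_num
  -- apply Phragmén–Lindelöf
  have hPL := PhragmenLindelof.vertical_strip (a := 0) (b := 1) hd hB hle0 hle1
    (z := (↑α : ℂ)) (by simp [hα0]) (by simp [hα1])
  -- unwind at the real point α
  rw [absF] at hPL
  have hre : (↑α : ℂ).re = α := Complex.ofReal_re α
  rw [hre] at hPL
  have hKge : (1:ℝ) ≤ ((norm (Complex.cos (↑(π/2) * ↑α - ↑(π/4))))⁻¹) ^ 3 := by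
    have hcos_le : norm (Complex.cos (↑(π/2) * ↑α - ↑(π/4))) ≤ 1 := by
      have : (↑(π/2) * ↑α - ↑(π/4) : ℂ) = ↑(π/2 * α - π/4) := by push_cast; ring
      rw [this, ← Complex.ofReal_cos, Complex.norm_real, Real.norm_eq_abs]
      exact Real.abs_cos_le_one _
    have hcos_pos : 0 < norm (Complex.cos (↑(π/2) * ↑α - ↑(π/4))) := by
      have := cf_pos (w := (↑α : ℂ)) (by rw [hre]; linarith) (by rw [hre]; linarith)
      calc (0:ℝ) < (Complex.cos (↑(π/2) * ↑α - ↑(π/4))).re := this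
        _ ≤ |(Complex.cos (↑(π/2) * ↑α - ↑(π/4))).re| := le_abs_self _
        _ ≤ _ := Complex.abs_re_le_norm _
    have : (1:ℝ) ≤ (norm (Complex.cos (↑(π/2) * ↑α - ↑(π/4))))⁻¹ :=
      (one_le_inv₀ hcos_pos).2 hcos_le
    exact one_le_pow₀ this
  have hexp : Real.exp (-(α * c)) = (x ^ α)⁻¹ := by
    rw [hc, Real.exp_neg, Real.rpow_def_of_pos hx0, mul_comm]
  have hmain : norm (Complex.Gamma (1/2 + ↑α + ↑x * I)) * (x ^ α)⁻¹ ≤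
      200 * Real.sqrt (π / Real.cosh (π * x)) := by
    have h0 : (0:ℝ) ≤ norm (Complex.Gamma (1/2 + ↑α + ↑x * I)) * (x ^ α)⁻¹ := by
      positivity
    calc norm (Complex.Gamma (1/2 + ↑α + ↑x * I)) * (x ^ α)⁻¹
        = norm (Complex.Gamma (1/2 + ↑α + ↑x * I)) * (x ^ α)⁻¹ * 1 := by ring
      _ ≤ norm (Complex.Gamma (1/2 + ↑α + ↑x * I)) * (x ^ α)⁻¹ *
          ((norm (Complex.cos (↑(π/2) * ↑α - ↑(π/4))))⁻¹) ^ 3 := by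
          exact mul_le_mul_of_nonneg_left hKge h0
      _ ≤ 200 * Real.sqrt (π / Real.cosh (π * x)) := by
          rw [← hexp]
          exact hPL
  have hxα : (0:ℝ) < x ^ α := Real.rpow_pos_of_pos hx0 α
  calc norm (Complex.Gamma (1/2 + ↑α + ↑x * I))
      = norm (Complex.Gamma (1/2 + ↑α + ↑x * I)) * (x ^ α)⁻¹ * x ^ α := by
        field_simp
    _ ≤ 200 * Real.sqrt (π / Real.cosh (π * x)) * x ^ α :=
        mul_le_mul_of_nonneg_right hmain hxα.le
    _ = 200 * x ^ α * Real.sqrt (π / Real.cosh (π * x)) := by ring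

lemma gamma_descend (k : ℕ) (σ x : ℝ) (hx : 1 ≤ x) :
    norm (Complex.Gamma (↑σ + ↑x * I)) * x ^ k ≤
      norm (Complex.Gamma (↑(σ + k) + ↑x * I)) := by
  induction k with
  | zero => simp
  | succ k ih =>
    have hx0 : (0:ℝ) < x := lt_of_lt_of_le one_pos hx
    have hne : (↑(σ + k) + ↑x * I : ℂ) ≠ 0 := by
      intro h
      have := congrArg Complex.im h
      simp at this
      linarith
    have harg : (↑(σ + k) + ↑x * I : ℂ) + 1 = ↑(σ + (k+1:ℕ)) + ↑x * I := by
      push_cast; ring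
    have hrec := Complex.Gamma_add_one _ hne
    rw [harg] at hrec
    have him : x ≤ norm (↑(σ + k) + ↑x * I : ℂ) := by
      have h1 := Complex.abs_im_le_norm (↑(σ + k) + ↑x * I : ℂ)
      have h2 : (↑(σ + k) + ↑x * I : ℂ).im = x := by simp
      rw [h2, abs_of_pos hx0] at h1
      exact h1
    calc norm (Complex.Gamma (↑σ + ↑x * I)) * x ^ (k+1)
        = (norm (Complex.Gamma (↑σ + ↑x * I)) * x ^ k) * x := by ring
      _ ≤ norm (Complex.Gamma (↑(σ + k) + ↑x * I)) * x :=
          mul_le_mul_of_nonneg_right ih hx0.le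
      _ ≤ norm (Complex.Gamma (↑(σ + k) + ↑x * I)) *
            norm (↑(σ + k) + ↑x * I : ℂ) :=
          mul_le_mul_of_nonneg_left him (norm_nonneg _)
      _ = norm ((↑(σ + k) + ↑x * I : ℂ) * Complex.Gamma (↑(σ + k) + ↑x * I)) := by
          rw [norm_mul]; ring
      _ = norm (Complex.Gamma (↑(σ + (k+1:ℕ)) + ↑x * I)) := by rw [← hrec]

lemma gamma_ascend (n : ℕ) : ∃ C : ℝ, 0 < C ∧ ∀ γ : ℝ, 0 ≤ γ → γ ≤ n + 1 →
    ∀ x : ℝ, 1 ≤ x → norm (Complex.Gamma (1/2 + ↑γ + ↑x * I)) ≤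
      C * x ^ γ * Real.sqrt (π / Real.cosh (π * x)) := by
  induction n with
  | zero =>
    exact ⟨200, by norm_num, fun γ h0 h1 x hx => key_ratio hx h0 (by simpa using h1)⟩
  | succ n ih =>
    obtain ⟨C, hC0, hC⟩ := ih
    refine ⟨C * (n + 4), by positivity, ?_⟩
    intro γ h0 h1 x hx
    have hx0 : (0:ℝ) < x := lt_of_lt_of_le one_pos hx
    have hs : (0:ℝ) ≤ Real.sqrt (π / Real.cosh (π * x)) := Real.sqrt_nonneg _
    rcases le_or_gt γ (n + 1) with hle | hgt
    · calc norm (Complex.Gamma (1/2 + ↑γ + ↑x * I))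
          ≤ C * x ^ γ * Real.sqrt (π / Real.cosh (π * x)) := hC γ h0 hle x hx
        _ ≤ C * (n + 4) * x ^ γ * Real.sqrt (π / Real.cosh (π * x)) := by
            have : C * x ^ γ ≤ C * (n + 4) * x ^ γ := by
              have hxγ : (0:ℝ) < x ^ γ := Real.rpow_pos_of_pos hx0 γ
              nlinarith [mul_nonneg (mul_nonneg hC0.le hxγ.le)
                (by positivity : (0:ℝ) ≤ (n:ℝ) + 3)]
            exact mul_le_mul_of_nonneg_right this hs
    · set β := γ - 1 with hβ
      have hβ0 : 0 ≤ β := by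
        have : (0:ℝ) ≤ (n:ℝ) := by positivity
        simp only [hβ]; linarith
      have hβ1 : β ≤ n + 1 := by simp only [hβ]; push_cast at h1 ⊢; linarith
      have hIH := hC β hβ0 hβ1 x hx
      have hne : (1/2 + ↑β + ↑x * I : ℂ) ≠ 0 := by
        intro h
        have := congrArg Complex.im h
        simp at this
        linarith
      have harg : (1/2 + ↑β + ↑x * I : ℂ) + 1 = 1/2 + ↑γ + ↑x * I := by
        simp only [hβ]; push_cast; ring
      have hrec := Complex.Gamma_add_one _ hne
      rw [harg] at hrec
      have habs : norm (1/2 + ↑β + ↑x * I : ℂ) ≤ (n + 4) * x := by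
        calc norm (1/2 + ↑β + ↑x * I : ℂ)
            ≤ |(1/2 + ↑β + ↑x * I : ℂ).re| + |(1/2 + ↑β + ↑x * I : ℂ).im| :=
              Complex.norm_le_abs_re_add_abs_im _
          _ = (1/2 + β) + x := by
              have h5 : (1/2 + ↑β + ↑x * I : ℂ).re = 1/2 + β := by simp
              have h6 : (1/2 + ↑β + ↑x * I : ℂ).im = x := by simp
              rw [h5, h6, _root_.abs_of_nonneg (show (0:ℝ) ≤ 1/2 + β by linarith), _root_.abs_of_pos hx0]
          _ ≤ (n + 4) * x := by
              have hb2 : β ≤ n + 1 := hβ1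
              nlinarith [(by positivity : (0:ℝ) ≤ (n:ℝ))]
      calc norm (Complex.Gamma (1/2 + ↑γ + ↑x * I))
          = norm (1/2 + ↑β + ↑x * I : ℂ) *
            norm (Complex.Gamma (1/2 + ↑β + ↑x * I)) := by
            rw [hrec, norm_mul]
        _ ≤ ((n + 4) * x) * (C * x ^ β * Real.sqrt (π / Real.cosh (π * x))) := by
            refine mul_le_mul habs hIH (norm_nonneg _) (by positivity)
        _ = C * (n + 4) * (x ^ β * x) * Real.sqrt (π / Real.cosh (π * x)) := by ring
        _ = C * (n + 4) * x ^ γ * Real.sqrt (π / Real.cosh (π * x)) := by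
            rw [← Real.rpow_add_one (ne_of_gt hx0) β]
            simp only [hβ]
            ring_nf

lemma sqrt_cosh_bound {x : ℝ} (hx : 0 ≤ x) :
    Real.sqrt (π / Real.cosh (π * x)) ≤ Real.sqrt (2*π) * Real.exp (-(π/2) * x) := by
  have hπ := Real.pi_pos
  have h1 : Real.exp (π * x) / 2 ≤ Real.cosh (π * x) := by
    have := cosh_ge_half_exp_abs (π * x)
    rwa [_root_.abs_of_nonneg (by positivity)] at this
  have h2 : π / Real.cosh (π * x) ≤ 2 * π * Real.exp (-(π * x)) := by
    rw [div_le_iff₀ (Real.cosh_pos _)]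
    have h3 : 2 * π * Real.exp (-(π * x)) * (Real.exp (π * x) / 2) ≤
        2 * π * Real.exp (-(π * x)) * Real.cosh (π * x) := by
      refine mul_le_mul_of_nonneg_left h1 (by positivity)
    have h5 : Real.exp (-(π * x)) * Real.exp (π * x) = 1 := by
      rw [← Real.exp_add]; simp
    have h4 : 2 * π * Real.exp (-(π * x)) * (Real.exp (π * x) / 2) = π := by
      linear_combination π * h5
    linarith
  calc Real.sqrt (π / Real.cosh (π * x)) ≤ Real.sqrt (2 * π * Real.exp (-(π * x))) :=
        Real.sqrt_le_sqrt h2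
    _ = Real.sqrt (2*π) * Real.exp (-(π/2) * x) := by
        rw [Real.sqrt_mul (by positivity)]
        congr 1
        rw [show -(π * x) = (-(π/2) * x) + (-(π/2) * x) by ring, Real.exp_add,
          Real.sqrt_mul_self (Real.exp_pos _).le]

lemma gamma_line_claim (R' : ℝ) : ∃ M₁ : ℝ, 0 < M₁ ∧ ∀ σ : ℝ, |σ| ≤ R' → ∀ x : ℝ, 1 ≤ x →
    norm (Complex.Gamma (↑σ + ↑x * I)) ≤
      M₁ * Real.exp (-(π/2) * x) * x ^ (σ - 1/2) := by
  obtain ⟨k, hk⟩ := exists_nat_ge (R' + 1/2)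
  obtain ⟨C, hC0, hC⟩ := gamma_ascend (2 * k)
  refine ⟨C * Real.sqrt (2*π), by positivity, ?_⟩
  intro σ hσ x hx
  have hx0 : (0:ℝ) < x := lt_of_lt_of_le one_pos hx
  have hσ1 := abs_le.1 hσ
  set γ : ℝ := σ + k - 1/2 with hγ
  have hγ0 : 0 ≤ γ := by simp only [hγ]; linarith [hσ1.1]
  have hγ1 : γ ≤ (2*k : ℕ) + 1 := by
    simp only [hγ]; push_cast; linarith [hσ1.2]
  have hdes := gamma_descend k σ x hx
  have harg : (↑(σ + k) + ↑x * I : ℂ) = 1/2 + ↑γ + ↑x * I := by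
    simp only [hγ]; push_cast; ring
  rw [harg] at hdes
  have hasc := hC γ hγ0 hγ1 x hx
  have hsq := sqrt_cosh_bound (by linarith : (0:ℝ) ≤ x)
  have hxk : (0:ℝ) < x ^ (k:ℕ) := by positivity
  -- combine
  have h7 : norm (Complex.Gamma (↑σ + ↑x * I)) ≤
      C * x ^ γ * Real.sqrt (π / Real.cosh (π * x)) / x ^ (k:ℕ) := by
    rw [le_div_iff₀ hxk]
    exact hdes.trans hasc
  have h8 : x ^ γ / x ^ (k:ℕ) = x ^ (σ - 1/2) := by
    rw [← Real.rpow_natCast x k, ← Real.rpow_sub hx0]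
    congr 1
    simp only [hγ]; ring
  calc norm (Complex.Gamma (↑σ + ↑x * I))
      ≤ C * x ^ γ * Real.sqrt (π / Real.cosh (π * x)) / x ^ (k:ℕ) := h7
    _ = C * Real.sqrt (π / Real.cosh (π * x)) * (x ^ γ / x ^ (k:ℕ)) := by ring
    _ = C * Real.sqrt (π / Real.cosh (π * x)) * x ^ (σ - 1/2) := by rw [h8]
    _ ≤ C * (Real.sqrt (2*π) * Real.exp (-(π/2) * x)) * x ^ (σ - 1/2) := by
        refine mul_le_mul_of_nonneg_right (mul_le_mul_of_nonneg_left hsq hC0.le) ?_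
        positivity
    _ = C * Real.sqrt (2*π) * Real.exp (-(π/2) * x) * x ^ (σ - 1/2) := by ring

lemma abs_Gamma_abs_im (σ x : ℝ) :
    norm (Complex.Gamma (↑σ + ↑x * I)) =
      norm (Complex.Gamma (↑σ + ↑|x| * I)) := by
  rcases abs_cases x with ⟨h, _⟩ | ⟨h, _⟩
  · rw [h]
  · rw [h]
    have harg : (↑σ + ↑x * I : ℂ) = starRingEnd ℂ (↑σ + ↑(-x) * I) := by
      apply Complex.ext <;> simp
    rw [harg, Complex.Gamma_conj]
    simp

/-- Stirling-type estimate: for every compact set `I ⊂ (0,∞)` there is `M > 0` such that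
for all `t, y ∈ I` and all real `x` with `|x| ≥ 1`, writing `z = x + yi`,
`|Γ(t + zi)·Γ(t − zi)| ≤ M·e^{−π|x|}·|x|^{2t−1}`. -/theorem gamma_product_estimate (I : Set ℝ) (hI : IsCompact I) (hI' : I ⊆ Set.Ioi 0) :
    ∃ M : ℝ, 0 < M ∧ ∀ t ∈ I, ∀ y ∈ I, ∀ x : ℝ, 1 ≤ |x| →
      ‖Complex.Gamma ((t : ℂ) + ((x : ℂ) + (y : ℂ) * Complex.I) * Complex.I) *
          Complex.Gamma ((t : ℂ) - ((x : ℂ) + (y : ℂ) * Complex.I) * Complex.I)‖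
        ≤ M * Real.exp (-Real.pi * |x|) * |x| ^ (2 * t - 1) := by
  rcases I.eq_empty_or_nonempty with hem | hne
  · exact ⟨1, one_pos, by simp [hem]⟩
  obtain ⟨R, hRI, hR⟩ := hI.exists_isGreatest hne
  have hR0 : 0 < R := hI' hRI
  obtain ⟨M₁, hM₁0, hM₁⟩ := gamma_line_claim (2 * R)
  refine ⟨M₁ ^ 2, by positivity, ?_⟩
  intro t ht y hy x hx
  have ht0 : 0 < t := hI' ht
  have hy0 : 0 < y := hI' hy
  have htR : t ≤ R := hR ht
  have hyR : y ≤ R := hR hy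
  have hxa : (0:ℝ) < |x| := lt_of_lt_of_le one_pos hx
  -- rewrite the two Gamma arguments
  have eA : ((t : ℂ) + ((x : ℂ) + (y : ℂ) * Complex.I) * Complex.I) = ↑(t - y) + ↑x * Complex.I := by
    apply Complex.ext <;> simp <;> ring
  have eB : ((t : ℂ) - ((x : ℂ) + (y : ℂ) * Complex.I) * Complex.I) = ↑(t + y) + ↑(-x) * Complex.I := by
    apply Complex.ext <;> simp <;> ring
  rw [eA, eB, norm_mul, abs_Gamma_abs_im (t - y) x, abs_Gamma_abs_im (t + y) (-x), abs_neg]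
  have hA : norm (Complex.Gamma (↑(t - y) + ↑|x| * Complex.I)) ≤
      M₁ * Real.exp (-(π/2) * |x|) * |x| ^ (t - y - 1/2) := by
    refine hM₁ (t - y) ?_ |x| hx
    rw [abs_le]; constructor <;> nlinarith
  have hB : norm (Complex.Gamma (↑(t + y) + ↑|x| * Complex.I)) ≤
      M₁ * Real.exp (-(π/2) * |x|) * |x| ^ (t + y - 1/2) := by
    refine hM₁ (t + y) ?_ |x| hx
    rw [abs_le]; constructor <;> nlinarith
  calc norm (Complex.Gamma (↑(t - y) + ↑|x| * Complex.I)) *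
        norm (Complex.Gamma (↑(t + y) + ↑|x| * Complex.I))
      ≤ (M₁ * Real.exp (-(π/2) * |x|) * |x| ^ (t - y - 1/2)) *
        (M₁ * Real.exp (-(π/2) * |x|) * |x| ^ (t + y - 1/2)) := by
        refine mul_le_mul hA hB (norm_nonneg _) (by positivity)
    _ = M₁ ^ 2 * (Real.exp (-(π/2) * |x|) * Real.exp (-(π/2) * |x|)) *
        (|x| ^ (t - y - 1/2) * |x| ^ (t + y - 1/2)) := by ring
    _ = M₁ ^ 2 * Real.exp (-π * |x|) * |x| ^ (2 * t - 1) := by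
        rw [← Real.exp_add, ← Real.rpow_add hxa]
        congr 2 <;> ring
end
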